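/- arXiv:1701.06501 — 8 statements merged into one kernel-verified Lean document; each statement's English description precedes it below -/
import Mathlib

section
/- If L is an N×N symmetric positive definite real matrix, then the function J ↦ det(L_J)/det(I+L), defined on subsets J of {1,...,N}, is a probability mass function: each value is nonnegative and they sum to 1. -/
open Matrix BigOperators

noncomputable def subm {N : ℕ} (L : Matrix (Fin N) (Fin N) ℝ) (J : Finset (Fin N)) :
    Matrix J J ℝ :=
  L.submatrix (fun i => (i : Fin N)) (fun j => (j : Fin N))

/-- A sum over all of `n` of a function vanishing off the range of an injective
`f : m → n` collapses to a sum over `m`. -/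
lemma sum_range_collapse {m n : Type*} [Fintype m] [Fintype n] [DecidableEq n]
    (f : m → n) (hf : Function.Injective f) (g : n → ℝ)
    (hg : ∀ j, (∀ i, f i ≠ j) → g j = 0) :
    ∑ j, g j = ∑ i, g (f i) := by
  have h1 : ∑ i, g (f i) = ∑ j ∈ Finset.univ.image f, g j :=
    (Finset.sum_image (fun i _ j _ h => hf h)).symm
  rw [h1]
  refine (Finset.sum_subset (Finset.subset_univ _) ?_).symm
  intro j _ hj
  refine hg j fun i hij => hj ?_
  simp [← hij]

/-- A principal submatrix (along an injective map) of a positive definite real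
matrix is positive definite. -/
lemma posDef_submatrix_inj {N : ℕ} {L : Matrix (Fin N) (Fin N) ℝ} (hL : L.PosDef)
    {mm : Type*} [Fintype mm] [DecidableEq mm] (f : mm → Fin N)
    (hf : Function.Injective f) : (L.submatrix f f).PosDef := by
  refine posDef_iff_dotProduct_mulVec.mpr ⟨?_, ?_⟩
  · have h := hL.isHermitian
    ext i j
    simpa using congrFun (congrFun h (f i)) (f j)
  · intro x hx
    set y : Fin N → ℝ := Function.extend f x 0 with hy
    have hyf : ∀ i, y (f i) = x i := fun i => hf.extend_apply x 0 i
    have hy0 : ∀ j, (∀ i, f i ≠ j) → y j = 0 := by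
      intro j hj
      rw [hy, Function.extend_apply']
      · rfl
      · rintro ⟨i, rfl⟩; exact hj i rfl
    have hyne : y ≠ 0 := by
      intro h
      apply hx
      ext i
      have := congrFun h (f i)
      simpa [hyf i] using this
    have key : star x ⬝ᵥ (L.submatrix f f) *ᵥ x = star y ⬝ᵥ L *ᵥ y := by
      simp only [star_trivial, dotProduct, mulVec]
      rw [sum_range_collapse f hf _ (by intro j hj; simp [hy0 j hj])]
      refine Finset.sum_congr rfl fun i _ => ?_
      rw [hyf i]
      congr 1
      rw [sum_range_collapse f hf _ (by intro j hj; simp [hy0 j hj])]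
      refine Finset.sum_congr rfl fun i' _ => ?_
      rw [hyf i', submatrix_apply]
    rw [key]
    exact hL.dotProduct_mulVec_pos hyne

/-- Sum of all principal minors equals `det (1 + L)`. -/
lemma sum_subm_det {N : ℕ} (L : Matrix (Fin N) (Fin N) ℝ) :
    ∑ J : Finset (Fin N), (subm L J).det = (1 + L).det := by
  have hadd : (1 + L).det = ∑ s : Finset (Fin N),
      (detRowAlternating (s.piecewise L (1 : Matrix (Fin N) (Fin N) ℝ)) : ℝ) := by
    have h := (detRowAlternating :
        (Fin N → ℝ) [⋀^Fin N]→ₗ[ℝ] ℝ).toMultilinearMap.map_add_univ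
        (fun i => L i) (fun i => (1 : Matrix (Fin N) (Fin N) ℝ) i)
    have h1 : (1 + L : Matrix (Fin N) (Fin N) ℝ) =
        (fun i => L i) + (fun i => (1 : Matrix (Fin N) (Fin N) ℝ) i) := by
      ext i j; simp [add_comm]
    rw [show (1 + L : Matrix (Fin N) (Fin N) ℝ).det =
        detRowAlternating (1 + L : Matrix (Fin N) (Fin N) ℝ) from rfl, h1]
    exact h
  rw [hadd]
  refine (Finset.sum_congr rfl fun s _ => ?_).symm
  -- `det (s.piecewise L 1) = det (subm L s)`
  have hdet : (detRowAlternating (s.piecewise L (1 : Matrix (Fin N) (Fin N) ℝ)) : ℝ)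
      = (Matrix.of (s.piecewise L (1 : Matrix (Fin N) (Fin N) ℝ))).det := rfl
  rw [hdet]
  set M := Matrix.of (s.piecewise L (1 : Matrix (Fin N) (Fin N) ℝ)) with hM
  let e : {a : Fin N // a ∈ s} ⊕ {a : Fin N // ¬ a ∈ s} ≃ Fin N :=
    Equiv.sumCompl (· ∈ s)
  have hsub : M.submatrix e e =
      Matrix.fromBlocks (subm L s)
        (Matrix.of fun (i : {a : Fin N // a ∈ s}) (j : {a : Fin N // ¬ a ∈ s}) =>
          L (i : Fin N) (j : Fin N))
        (0 : Matrix {a : Fin N // ¬ a ∈ s} {a : Fin N // a ∈ s} ℝ)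
        (1 : Matrix {a : Fin N // ¬ a ∈ s} {a : Fin N // ¬ a ∈ s} ℝ) := by
    ext i j
    cases i with
    | inl a =>
      cases j with
      | inl b =>
        simp [M, e, Matrix.submatrix_apply, Finset.piecewise_eq_of_mem _ _ _ a.2, Finset.piecewise, subm]
      | inr b =>
        simp [M, e, Matrix.submatrix_apply, Finset.piecewise_eq_of_mem _ _ _ a.2, Finset.piecewise]
    | inr a =>
      cases j with
      | inl b =>
        have hne : (a : Fin N) ≠ (b : Fin N) := by
          intro h
          exact a.2 (h ▸ b.2)
        simp [M, e, Matrix.submatrix_apply,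
          Finset.piecewise_eq_of_notMem _ _ _ a.2, Finset.piecewise, a.2, Matrix.one_apply_ne hne]
      | inr b =>
        by_cases hab : a = b
        · subst hab
          simp [M, e, Matrix.submatrix_apply,
            Finset.piecewise_eq_of_notMem _ _ _ a.2, Finset.piecewise, a.2, Matrix.one_apply]
        · have hne : (a : Fin N) ≠ (b : Fin N) := fun h => hab (Subtype.ext h)
          simp [M, e, Matrix.submatrix_apply,
            Finset.piecewise_eq_of_notMem _ _ _ a.2, Finset.piecewise, a.2, Matrix.one_apply_ne hne,
            Matrix.one_apply, hab, hne]
  calc M.det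
      = (M.submatrix e e).det := (Matrix.det_submatrix_equiv_self e M).symm
    _ = (subm L s).det * (1 : Matrix {a : Fin N // ¬ a ∈ s} {a : Fin N // ¬ a ∈ s} ℝ).det := by
        rw [hsub, Matrix.det_fromBlocks_zero₂₁]
    _ = (subm L s).det := by rw [Matrix.det_one, mul_one]

/-- For `L` symmetric positive definite, `J ↦ det(L_J)/det(I+L)` is a
probability mass function on subsets of `[N]`. -/
theorem dpp_is_pmf {N : ℕ} (L : Matrix (Fin N) (Fin N) ℝ)
    (hL : L.PosDef) :
    (∀ J : Finset (Fin N), 0 ≤ (subm L J).det / (1 + L).det) ∧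
      ∑ J : Finset (Fin N), (subm L J).det / (1 + L).det = 1 := by
  have hsubdet : ∀ J : Finset (Fin N), 0 < (subm L J).det := by
    intro J
    exact (posDef_submatrix_inj hL (fun i : J => (i : Fin N)) Subtype.coe_injective).det_pos
  have h1L : (1 + L : Matrix (Fin N) (Fin N) ℝ).PosDef := by
    refine posDef_iff_dotProduct_mulVec.mpr ⟨?_, ?_⟩
    · have h := hL.isHermitian
      ext i j
      have := congrFun (congrFun h i) j
      simp only [conjTranspose_apply, star_trivial] at this ⊢
      simp [Matrix.add_apply, Matrix.one_apply, eq_comm, this]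
    · intro x hx
      have h1 : star x ⬝ᵥ (1 + L) *ᵥ x = x ⬝ᵥ x + star x ⬝ᵥ L *ᵥ x := by
        rw [add_mulVec, dotProduct_add, one_mulVec, star_trivial]
      rw [h1]
      have h2 : (0:ℝ) ≤ x ⬝ᵥ x := by
        apply Finset.sum_nonneg
        intro i _
        exact mul_self_nonneg _
      exact add_pos_of_nonneg_of_pos h2 (hL.dotProduct_mulVec_pos hx)
  have hdetpos : 0 < (1 + L : Matrix (Fin N) (Fin N) ℝ).det := h1L.det_pos
  constructor
  · intro J
    exact div_nonneg (hsubdet J).le hdetpos.le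
  · rw [← Finset.sum_div, sum_subm_det, div_self hdetpos.ne']
end

section
/- If L is symmetric positive definite with probability weights p_J = det(L_J)/det(I+L), then the sum over all J ⊆ {1,...,N} of p_J · (L_J)^{-1} (embedded as an N×N matrix supported on J×J, zero elsewhere) equals (I + L)^{-1}. -/
open Matrix BigOperators

/-- Embed a matrix indexed by `J` back into an `N × N` matrix, with zeros off `J × J`. -/
noncomputable def embed {N : ℕ} (J : Finset (Fin N)) (M : Matrix J J ℝ) :
    Matrix (Fin N) (Fin N) ℝ :=
  fun i j => if h : i ∈ J ∧ j ∈ J then M ⟨i, h.1⟩ ⟨j, h.2⟩ else 0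

/-- If all rows of `M` outside `J` are the corresponding unit vectors, then
`det M` equals the determinant of the principal submatrix on `J`. -/
lemma det_eq_det_subm {N : ℕ} (M : Matrix (Fin N) (Fin N) ℝ) (J : Finset (Fin N))
    (h : ∀ k, k ∉ J → M k = Pi.single k 1) : M.det = (subm M J).det := by
  classical
  let e : {k : Fin N // k ∈ J} ⊕ {k : Fin N // k ∉ J} ≃ Fin N :=
    Equiv.sumCompl (fun k => k ∈ J)
  have hsub : M.submatrix e e =
      Matrix.fromBlocks (subm M J) (Matrix.of fun (x : {k : Fin N // k ∈ J}) (y : {k : Fin N // k ∉ J}) => M x y) 0 1 := by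
    ext i j
    cases i with
    | inl x =>
      cases j with
      | inl y => rfl
      | inr y => rfl
    | inr x =>
      cases j with
      | inl y =>
        have hx := h x x.2
        have : M (x : Fin N) (y : Fin N) = 0 := by
          rw [hx, Pi.single_apply, if_neg]
          intro hxy
          exact x.2 (hxy ▸ y.2)
        simpa [e, Matrix.fromBlocks] using this
      | inr y =>
        have hx := h x x.2
        have : M (x : Fin N) (y : Fin N) = if (x : Fin N) = y then 1 else 0 := by
          rw [hx, Pi.single_apply]
          simp [eq_comm]
        simpa [e, Matrix.fromBlocks, Matrix.one_apply, Subtype.ext_iff] using this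
  rw [← Matrix.det_submatrix_equiv_self e, hsub, Matrix.det_fromBlocks_zero₂₁,
    Matrix.det_one, mul_one]

lemma sum_embed_adjugate {N : ℕ} (L : Matrix (Fin N) (Fin N) ℝ) :
    ∑ J : Finset (Fin N), embed J (adjugate (subm L J)) = adjugate (1 + L) := by
  classical
  ext i j
  rw [Matrix.sum_apply, adjugate_apply]
  -- rows decomposition
  set a : Fin N → Fin N → ℝ := fun k => if k = j then Pi.single i 1 else Pi.single k 1 with ha
  set b : Fin N → Fin N → ℝ := fun k => if k = j then 0 else L k with hb
  have hM : ((1 + L).updateRow j (Pi.single i 1)) = Matrix.of (a + b) := by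
    ext k l
    by_cases hk : k = j
    · subst hk
      simp [a, b, Matrix.updateRow_self]
    · rw [Matrix.updateRow_ne hk]
      show (1 + L) k l = (a k + b k) l
      rw [show a k = Pi.single k 1 from if_neg hk, show b k = L k from if_neg hk]
      simp only [Pi.add_apply, Matrix.add_apply, Matrix.one_apply, Pi.single_apply]
      by_cases hkl : k = l
      · simp [hkl]
      · rw [if_neg hkl, if_neg (fun h : l = k => hkl h.symm)]
  rw [hM]
  have hdet : (Matrix.of (a + b)).det =
      ∑ s : Finset (Fin N), (Matrix.of (s.piecewise a b)).det :=
    (Matrix.detRowAlternating : AlternatingMap ℝ (Fin N → ℝ) ℝ (Fin N)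
      ).toMultilinearMap.map_add_univ a b
  rw [hdet]
  -- the involution s ↦ symmDiff sᶜ {j}
  let σ : Finset (Fin N) → Finset (Fin N) := fun s => symmDiff sᶜ {j}
  have hσmem : ∀ (s : Finset (Fin N)) (k : Fin N), k ∈ σ s ↔ (k ∈ s ↔ k = j) := by
    intro s k
    simp only [σ, Finset.mem_symmDiff, Finset.mem_compl, Finset.mem_singleton]
    tauto
  have hσ : Function.Involutive σ := by
    intro s
    ext k
    rw [hσmem, hσmem]
    tauto
  refine Fintype.sum_equiv (Function.Involutive.toPerm σ hσ) _ _ fun J => ?_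
  show embed J (adjugate (subm L J)) i j = (Matrix.of ((σ J).piecewise a b)).det
  by_cases hj : j ∈ J
  · have hjσ : j ∈ σ J := by rw [hσmem]; simp [hj]
    by_cases hi : i ∈ J
    · -- main case
      have hrows : ∀ k, k ∉ J → (Matrix.of ((σ J).piecewise a b)) k = Pi.single k 1 := by
        intro k hk
        have hkj : k ≠ j := fun h => hk (h ▸ hj)
        have hkσ : k ∈ σ J := by rw [hσmem]; simp [hkj, hk]
        funext l
        change ((σ J).piecewise a b) k l = (Pi.single k 1 : Fin N → ℝ) l
        rw [Finset.piecewise_eq_of_mem _ _ _ hkσ,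
          show a k = Pi.single k 1 from if_neg hkj]
      rw [det_eq_det_subm _ J hrows]
      have hsubm : subm (Matrix.of ((σ J).piecewise a b)) J =
          (subm L J).updateRow ⟨j, hj⟩ (Pi.single ⟨i, hi⟩ 1) := by
        ext x y
        by_cases hxj : (x : Fin N) = j
        · have hx' : x = (⟨j, hj⟩ : {k // k ∈ J}) := Subtype.ext hxj
          subst hx'
          rw [Matrix.updateRow_self]
          have h1 : (Matrix.of ((σ J).piecewise a b)) j (y : Fin N)
              = (Pi.single i 1 : Fin N → ℝ) (y : Fin N) := by
            change ((σ J).piecewise a b) j (y : Fin N) = _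
            rw [Finset.piecewise_eq_of_mem _ _ _ hjσ, show a j = Pi.single i 1 from if_pos rfl]
          rw [show subm (Matrix.of ((σ J).piecewise a b)) J ⟨j, hj⟩ y
              = (Matrix.of ((σ J).piecewise a b)) j (y : Fin N) from rfl, h1]
          simp [Pi.single_apply, Subtype.ext_iff]
        · have hx' : x ≠ (⟨j, hj⟩ : {k // k ∈ J}) := fun h => hxj (congrArg Subtype.val h)
          rw [Matrix.updateRow_ne hx']
          have hxσ : (x : Fin N) ∉ σ J := by rw [hσmem]; simp [x.2, hxj]
          simp [subm, Finset.piecewise_eq_of_notMem _ _ _ hxσ, b, hxj]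
      rw [hsubm, ← adjugate_apply]
      simp [embed, hi, hj]
    · -- i ∉ J : both sides zero
      have hij : i ≠ j := fun h => hi (h ▸ hj)
      have hiσ : i ∈ σ J := by rw [hσmem]; simp [hij, hi]
      have hz : (Matrix.of ((σ J).piecewise a b)).det = 0 := by
        apply Matrix.det_zero_of_row_eq hij
        funext l
        change ((σ J).piecewise a b) i l = ((σ J).piecewise a b) j l
        rw [Finset.piecewise_eq_of_mem _ _ _ hiσ, Finset.piecewise_eq_of_mem _ _ _ hjσ,
          show a i = Pi.single i 1 from if_neg hij, show a j = Pi.single i 1 from if_pos rfl]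
      rw [hz]
      simp [embed, hi]
  · -- j ∉ J : both sides zero
    have hjσ : j ∉ σ J := by rw [hσmem]; simp [hj]
    have hz : (Matrix.of ((σ J).piecewise a b)).det = 0 := by
      apply Matrix.det_eq_zero_of_row_eq_zero j
      intro l
      change ((σ J).piecewise a b) j l = 0
      rw [Finset.piecewise_eq_of_notMem _ _ _ hjσ, show b j = 0 from if_pos rfl]
      rfl
    rw [hz]
    simp [embed, hj]

lemma subm_posDef {N : ℕ} {L : Matrix (Fin N) (Fin N) ℝ} (hL : L.PosDef)
    (J : Finset (Fin N)) : (subm L J).PosDef := by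
  classical
  refine posDef_iff_dotProduct_mulVec.mpr ⟨hL.1.submatrix _, fun x hx => ?_⟩
  set y : Fin N → ℝ := fun k => if h : k ∈ J then x ⟨k, h⟩ else 0 with hy
  have hy0 : y ≠ 0 := by
    intro h0
    apply hx
    funext p
    have := congrFun h0 (p : Fin N)
    simpa [y, p.2] using this
  have hpos := hL.dotProduct_mulVec_pos hy0
  have hinner : ∀ p : Fin N, (L *ᵥ y) p = ∑ q : {k // k ∈ J}, L p q * x q := by
    intro p
    show ∑ q : Fin N, L p q * y q = _
    have h1 : ∑ q : Fin N, L p q * y q = ∑ q ∈ J, L p q * y q :=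
      (Finset.sum_subset (Finset.subset_univ J) (fun q _ hq => by simp [y, hq])).symm
    have h2 : ∑ q ∈ J, L p q * y q = ∑ q : {k // k ∈ J}, L p (q : Fin N) * y (q : Fin N) :=
      (Finset.sum_coe_sort (J : Finset (Fin N)) (fun q => L p q * y q)).symm
    rw [h1, h2]
    refine Finset.sum_congr rfl fun q _ => ?_
    simp [y]
  have hdp : dotProduct (star y) (L *ᵥ y)
      = dotProduct (star x) ((subm L J) *ᵥ x) := by
    show ∑ p : Fin N, star (y p) * (L *ᵥ y) p = ∑ p : {k // k ∈ J}, star (x p) * ((subm L J) *ᵥ x) p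
    have h1 : ∑ p : Fin N, star (y p) * (L *ᵥ y) p = ∑ p ∈ J, star (y p) * (L *ᵥ y) p :=
      (Finset.sum_subset (Finset.subset_univ J) (fun p _ hp => by simp [y, hp])).symm
    have h2 : ∑ p ∈ J, star (y p) * (L *ᵥ y) p
        = ∑ p : {k // k ∈ J}, star (y (p : Fin N)) * (L *ᵥ y) (p : Fin N) :=
      (Finset.sum_coe_sort (J : Finset (Fin N)) (fun p => star (y p) * (L *ᵥ y) p)).symm
    rw [h1, h2]
    refine Finset.sum_congr rfl fun p _ => ?_
    rw [hinner]
    have hyp : y (p : Fin N) = x p := by simp [y, p.2]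
    rw [hyp]
    rfl
  rw [← hdp]
  exact hpos

/-- `∑_J p_J (L_J)⁻¹ = (I + L)⁻¹`, with the inverses of principal submatrices
embedded as `N × N` matrices supported on `J × J`. -/
theorem sum_weighted_principal_inverses {N : ℕ} (L : Matrix (Fin N) (Fin N) ℝ)
    (hL : L.PosDef) :
    ∑ J : Finset (Fin N),
        ((subm L J).det / (1 + L).det) • embed J (subm L J)⁻¹ = (1 + L)⁻¹ := by
  classical
  have h1L : (1 + L).PosDef := Matrix.PosDef.add Matrix.PosDef.one hL
  have hd1L : (1 + L).det ≠ 0 := ne_of_gt h1L.det_pos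
  have hterm : ∀ J : Finset (Fin N),
      ((subm L J).det / (1 + L).det) • embed J (subm L J)⁻¹
        = ((1 + L).det)⁻¹ • embed J (adjugate (subm L J)) := by
    intro J
    have hdJ : (subm L J).det ≠ 0 := ne_of_gt (subm_posDef hL J).det_pos
    have hInv : (subm L J)⁻¹ = ((subm L J).det)⁻¹ • adjugate (subm L J) := by
      rw [Matrix.inv_def, Ring.inverse_eq_inv]
    have hemb : ∀ (c : ℝ) (M : Matrix J J ℝ), embed J (c • M) = c • embed J M := by
      intro c M
      ext p q
      by_cases h : p ∈ J ∧ q ∈ J <;> simp [embed, h]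
    rw [hInv, hemb, smul_smul, div_eq_mul_inv, mul_comm ((subm L J).det),
      mul_assoc, mul_inv_cancel₀ hdJ, mul_one]
  rw [Finset.sum_congr rfl fun J _ => hterm J, ← Finset.smul_sum, sum_embed_adjugate,
    Matrix.inv_def, Ring.inverse_eq_inv]
end

section
/- For L symmetric positive definite with p_J = det(L_J)/det(I+L), and any symmetric matrix H: ∑_J p_J Tr((L_J^{-1} H_J)^2) − Tr(((I+L)^{-1}H)^2) = ∑_J p_J Tr(L_J^{-1} H_J)^2 − Tr((I+L)^{-1}H)^2. -/
open Matrix BigOperators Polynomial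

noncomputable def gsubm {ι : Type*} (M : Matrix ι ι ℝ) (J : Finset ι) : Matrix J J ℝ :=
  M.submatrix (fun i => (i : ι)) (fun j => (j : ι))

variable {ι : Type*} [Fintype ι] [DecidableEq ι]

theorem det_one_add_eq_sum {R : Type*} [CommRing R] (M : Matrix ι ι R) :
    (1 + M).det = ∑ J : Finset ι,
      (M.submatrix (fun i : J => (i : ι)) (fun j : J => (j : ι))).det := by
  have h : (1 + M).det
      = (Matrix.detRowAlternating (R := R) (n := ι)).toMultilinearMap
        ((fun i => M i) + (fun i => (1 : Matrix ι ι R) i)) := by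
    rw [add_comm]; rfl
  rw [h, MultilinearMap.map_add_univ]
  refine Finset.sum_congr rfl fun s _ => ?_
  have hdet : (Matrix.detRowAlternating (R := R) (n := ι)).toMultilinearMap
      (s.piecewise (fun i => M i) (fun i => (1 : Matrix ι ι R) i))
      = (Matrix.of (s.piecewise (fun i => M i) (fun i => (1 : Matrix ι ι R) i))).det := rfl
  rw [hdet]
  set P := Matrix.of (s.piecewise (fun i => M i) (fun i => (1 : Matrix ι ι R) i)) with hP
  have hblock := Matrix.twoBlockTriangular_det P (· ∈ s) (by
    intro i hi j hj
    have : P i j = (1 : Matrix ι ι R) i j := by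
      simp only [hP, Matrix.of_apply, Finset.piecewise_eq_of_notMem _ _ _ hi]
    rw [this, Matrix.one_apply_ne]
    rintro rfl; exact hi hj)
  rw [hblock]
  have h1 : Matrix.toSquareBlockProp P (· ∈ s) =
      M.submatrix (fun i : s => (i : ι)) (fun j : s => (j : ι)) := by
    ext i j
    show (s.piecewise (fun i => M i) fun i => (1 : Matrix ι ι R) i) ↑i ↑j = M ↑i ↑j
    rw [Finset.piecewise_eq_of_mem _ _ _ i.2]
  have h2 : Matrix.toSquareBlockProp P (fun i => ¬ i ∈ s) = 1 := by
    ext i j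
    show (s.piecewise (fun i => M i) fun i => (1 : Matrix ι ι R) i) ↑i ↑j = _
    rw [Finset.piecewise_eq_of_notMem _ _ _ i.2]
    simp [Matrix.one_apply, Subtype.ext_iff]
  rw [h1, h2, Matrix.det_one, mul_one]
  congr!


theorem det_subm_pair [LinearOrder ι] (M : Matrix ι ι ℝ) {i j : ι} (hij : i ≠ j) :
    (gsubm M {i, j}).det = M i i * M j j - M i j * M j i := by
  have hi : i ∈ ({i, j} : Finset ι) := by simp
  have hj : j ∈ ({i, j} : Finset ι) := by simp
  let e : Fin 2 ≃ ({i, j} : Finset ι) :=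
    { toFun := ![⟨i, hi⟩, ⟨j, hj⟩]
      invFun := fun x => if (x : ι) = i then 0 else 1
      left_inv := by
        intro x
        fin_cases x
        · simp
        · simp [hij.symm]
      right_inv := by
        rintro ⟨x, hx⟩
        rcases Finset.mem_insert.mp hx with rfl | hx
        · simp
        · have : x = j := Finset.mem_singleton.mp hx
          subst this
          simp [hij.symm] }
  rw [← Matrix.det_submatrix_equiv_self e, Matrix.det_fin_two]
  simp [gsubm, Matrix.submatrix_apply, e]

theorem sum_det_pairs [LinearOrder ι] (M : Matrix ι ι ℝ) :
    ∑ J ∈ Finset.univ.powersetCard 2, (gsubm M J).det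
      = (M.trace ^ 2 - (M * M).trace) / 2 := by
  classical
  set f : ι × ι → ℝ :=
    fun p => M p.1 p.1 * M p.2 p.2 - M p.1 p.2 * M p.2 p.1 with hf
  have hsym : ∀ p : ι × ι, f p.swap = f p := by
    intro p; simp only [hf, Prod.fst_swap, Prod.snd_swap]; ring
  set U : Finset (ι × ι) := Finset.univ ×ˢ Finset.univ with hU
  -- total sum
  have hall : ∑ p ∈ U, f p = M.trace ^ 2 - (M * M).trace := by
    rw [Finset.sum_product]
    have ht : M.trace ^ 2 = ∑ i, ∑ j, M i i * M j j := by
      rw [Matrix.trace, sq, Finset.sum_mul_sum]; rfl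
    have hm : (M * M).trace = ∑ i, ∑ j, M i j * M j i := by
      simp [Matrix.trace, Matrix.diag, Matrix.mul_apply]
    rw [ht, hm]
    simp only [hf, Finset.sum_sub_distrib]
  -- split
  have hsplit : ∑ p ∈ U, f p
      = ∑ p ∈ U.filter (fun p => p.1 < p.2), f p
        + ∑ p ∈ U.filter (fun p => ¬ p.1 < p.2), f p :=
    (Finset.sum_filter_add_sum_filter_not U _ f).symm
  have hnlt : ∑ p ∈ U.filter (fun p => ¬ p.1 < p.2), f p
      = ∑ p ∈ U.filter (fun p => p.2 < p.1), f p := by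
    refine (Finset.sum_subset ?_ ?_).symm
    · intro p hp
      simp only [Finset.mem_filter] at hp ⊢
      exact ⟨hp.1, lt_asymm hp.2⟩
    · intro p hp hnp
      simp only [Finset.mem_filter] at hp hnp
      have h1 : ¬ p.2 < p.1 := fun h => hnp ⟨hp.1, h⟩
      have : p.1 = p.2 := le_antisymm (not_lt.mp h1) (not_lt.mp hp.2)
      simp only [hf, this]; ring
  have hswap : ∑ p ∈ U.filter (fun p => p.2 < p.1), f p
      = ∑ p ∈ U.filter (fun p => p.1 < p.2), f p := by
    apply Finset.sum_nbij' (i := Prod.swap) (j := Prod.swap)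
    · intro a ha
      simp only [Finset.mem_filter, hU, Finset.mem_product] at ha ⊢
      exact ⟨⟨Finset.mem_univ _, Finset.mem_univ _⟩, ha.2⟩
    · intro a ha
      simp only [Finset.mem_filter, hU, Finset.mem_product] at ha ⊢
      exact ⟨⟨Finset.mem_univ _, Finset.mem_univ _⟩, ha.2⟩
    · intro a _; exact Prod.swap_swap a
    · intro a _; exact Prod.swap_swap a
    · intro a _; exact (hsym a).symm
  -- bijection with 2-subsets
  have hbij : ∑ p ∈ U.filter (fun p => p.1 < p.2), f p
      = ∑ J ∈ Finset.univ.powersetCard 2, (gsubm M J).det := by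
    apply Finset.sum_bij (i := fun p _ => ({p.1, p.2} : Finset ι))
    · intro p hp
      simp only [Finset.mem_filter] at hp
      rw [Finset.mem_powersetCard]
      exact ⟨Finset.subset_univ _, Finset.card_pair (ne_of_lt hp.2)⟩
    · intro p hp q hq h
      simp only [Finset.mem_filter] at hp hq
      have h1 : p.1 ∈ ({q.1, q.2} : Finset ι) := h ▸ (by simp)
      have h2 : p.2 ∈ ({q.1, q.2} : Finset ι) := h ▸ (by simp)
      have h3 : q.1 ∈ ({p.1, p.2} : Finset ι) := h ▸ (by simp)
      simp only [Finset.mem_insert, Finset.mem_singleton] at h1 h2 h3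
      have hpq : p.1 = q.1 := by
        rcases h1 with h1 | h1
        · exact h1
        · rcases h3 with h3 | h3
          · exact h3.symm
          · exact absurd (h1 ▸ h3 ▸ hp.2) (lt_asymm hq.2)
      refine Prod.ext hpq ?_
      rcases h2 with h2 | h2
      · exact absurd (hpq ▸ h2 ▸ hp.2) (lt_irrefl _)
      · exact h2
    · intro J hJ
      rw [Finset.mem_powersetCard] at hJ
      obtain ⟨a, b, hab, rfl⟩ := Finset.card_eq_two.mp hJ.2
      rcases lt_or_gt_of_ne hab with hlt | hgt
      · exact ⟨(a, b), by simp [Finset.mem_filter, hU, hlt], rfl⟩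
      · refine ⟨(b, a), by simp [Finset.mem_filter, hU, hgt], ?_⟩
        exact Finset.pair_comm b a
    · intro p hp
      simp only [Finset.mem_filter] at hp
      exact (det_subm_pair M (ne_of_lt hp.2)).symm
  have h2lt : 2 * ∑ p ∈ U.filter (fun p => p.1 < p.2), f p = M.trace ^ 2 - (M * M).trace := by
    rw [← hall, hsplit, hnlt, hswap]; ring
  rw [← hbij]
  linarith

theorem coeff_two_det_one_add [LinearOrder ι] (M : Matrix ι ι ℝ) :
    (Matrix.det (1 + (X : ℝ[X]) • M.map C)).coeff 2
      = (M.trace ^ 2 - (M * M).trace) / 2 := by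
  rw [det_one_add_eq_sum]
  have hterm : ∀ J : Finset ι,
      ((((X : ℝ[X]) • M.map C).submatrix (fun i : J => (i : ι)) (fun j : J => (j : ι))).det)
        = (X : ℝ[X]) ^ J.card * C ((gsubm M J).det) := by
    intro J
    have h1 : (((X : ℝ[X]) • M.map C).submatrix (fun i : J => (i : ι)) (fun j : J => (j : ι)))
        = (X : ℝ[X]) • ((gsubm M J).map C) := by
      ext i j
      simp [gsubm, Matrix.submatrix_apply, Matrix.map_apply, Matrix.smul_apply]
    rw [h1, Matrix.det_smul, Fintype.card_coe]
    congr 1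
    exact (RingHom.map_det C (gsubm M J)).symm
  simp only [hterm]
  rw [Polynomial.finset_sum_coeff]
  have hcoeff : ∀ J : Finset ι,
      ((X : ℝ[X]) ^ J.card * C ((gsubm M J).det)).coeff 2
        = if J.card = 2 then (gsubm M J).det else 0 := by
    intro J
    rw [mul_comm, Polynomial.C_mul_X_pow_eq_monomial, Polynomial.coeff_monomial]
  simp only [hcoeff]
  rw [← Finset.sum_filter]
  rw [show Finset.filter (fun a : Finset ι => a.card = 2) Finset.univ
      = Finset.univ.powersetCard 2 by
    rw [← Finset.powerset_univ, ← Finset.powersetCard_eq_filter]]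
  exact sum_det_pairs M


theorem coeff_two_det_add [LinearOrder ι] (A B : Matrix ι ι ℝ) (hA : IsUnit A.det) :
    (Matrix.det (A.map C + (X : ℝ[X]) • B.map C)).coeff 2
      = A.det * (((A⁻¹ * B).trace ^ 2 - ((A⁻¹ * B) * (A⁻¹ * B)).trace) / 2) := by
  have hfact : A.map (C : ℝ →+* ℝ[X]) + (X : ℝ[X]) • B.map C
      = A.map (C : ℝ →+* ℝ[X]) * (1 + (X : ℝ[X]) • (A⁻¹ * B).map C) := by
    rw [mul_add, mul_one, Matrix.mul_smul, ← Matrix.map_mul, ← Matrix.mul_assoc,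
      Matrix.mul_nonsing_inv _ hA, Matrix.one_mul]
  rw [hfact, Matrix.det_mul,
    show (A.map (C : ℝ →+* ℝ[X])).det = C A.det from (RingHom.map_det C A).symm,
    Polynomial.coeff_C_mul, coeff_two_det_one_add]

theorem posDef_subm {L : Matrix ι ι ℝ} (hL : L.PosDef) (J : Finset ι) :
    (gsubm L J).PosDef := by
  classical
  rw [Matrix.posDef_iff_dotProduct_mulVec]
  constructor
  · exact hL.1.submatrix _
  · intro x hx
    set y : ι → ℝ := fun i => if h : i ∈ J then x ⟨i, h⟩ else 0 with hy
    have hy0 : y ≠ 0 := by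
      obtain ⟨a, ha⟩ := Function.ne_iff.mp hx
      intro h
      apply ha
      have h2 := congrFun h (a : ι)
      simpa [hy, a.2] using h2
    have hpos := hL.dotProduct_mulVec_pos hy0
    have hstar : ∀ (v : ι → ℝ), star v = v := fun v => funext fun i => star_trivial _
    have hstar2 : ∀ (v : J → ℝ), star v = v := fun v => funext fun i => star_trivial _
    have inner : ∀ i, (L *ᵥ y) i = ∑ j : J, L i ↑j * x j := by
      intro i
      show ∑ j, L i j * y j = _
      rw [← Finset.sum_subset (Finset.subset_univ J) (fun j _ hj => by simp [hy, hj])]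
      rw [← Finset.sum_coe_sort J (fun j => L i j * y j)]
      refine Finset.sum_congr rfl fun j _ => ?_
      rw [hy]
      simp only [j.2, dif_pos, Subtype.coe_eta]
    have hRH : star y ⬝ᵥ (L *ᵥ y) = ∑ i : J, x i * ∑ j : J, L ↑i ↑j * x j := by
      rw [hstar]
      show ∑ i, y i * (L *ᵥ y) i = _
      rw [← Finset.sum_subset (Finset.subset_univ J) (fun i _ hi => by simp [hy, hi])]
      rw [← Finset.sum_coe_sort J (fun i => y i * (L *ᵥ y) i)]
      refine Finset.sum_congr rfl fun i _ => ?_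
      rw [inner, hy]
      simp only [i.2, dif_pos, Subtype.coe_eta]
    have hLH : star x ⬝ᵥ (gsubm L J *ᵥ x) = ∑ i : J, x i * ∑ j : J, L ↑i ↑j * x j := by
      rw [hstar2]
      refine Finset.sum_congr rfl fun i _ => ?_
      congr 1
    rw [hLH, ← hRH]
    exact hpos

theorem trace_sq_eq {m : Type*} [Fintype m] [DecidableEq m] (M : Matrix m m ℝ) :
    (M ^ 2).trace = (M * M).trace := by rw [pow_two]

theorem subm_eq_gsubm {N : ℕ} (M : Matrix (Fin N) (Fin N) ℝ) (J : Finset (Fin N)) : subm M J = gsubm M J := rfl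

set_option maxHeartbeats 1000000 in
/-- Second-order determinantal identity:
`∑_J p_J Tr((L_J⁻¹ H_J)²) − Tr(((I+L)⁻¹H)²) = ∑_J p_J Tr(L_J⁻¹ H_J)² − Tr((I+L)⁻¹H)²`. -/
theorem second_order_identity {N : ℕ} (L H : Matrix (Fin N) (Fin N) ℝ)
    (hL : L.PosDef) (hH : H.IsSymm) :
    ∑ J : Finset (Fin N),
        ((subm L J).det / (1 + L).det) * (((subm L J)⁻¹ * subm H J) ^ 2).trace
      - (((1 + L)⁻¹ * H) ^ 2).trace
    = ∑ J : Finset (Fin N),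
        ((subm L J).det / (1 + L).det) * ((subm L J)⁻¹ * subm H J).trace ^ 2
      - ((1 + L)⁻¹ * H).trace ^ 2 := by
  classical
  simp only [subm_eq_gsubm]
  have h1L : (1 + L).PosDef := Matrix.PosDef.one.add hL
  have hD : (0:ℝ) < (1 + L).det := h1L.det_pos
  have hDne : (1 + L).det ≠ 0 := ne_of_gt hD
  have hDu : IsUnit (1 + L).det := isUnit_iff_ne_zero.mpr hDne
  have hJu : ∀ J : Finset (Fin N), IsUnit (gsubm L J).det := fun J =>
    isUnit_iff_ne_zero.mpr (ne_of_gt (posDef_subm hL J).det_pos)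
  have hP : ((1+L).map (C : ℝ →+* ℝ[X]) + (X : ℝ[X]) • H.map (C : ℝ →+* ℝ[X])).det
      = ∑ J : Finset (Fin N),
        ((gsubm L J).map (C : ℝ →+* ℝ[X]) + (X : ℝ[X]) • (gsubm H J).map (C : ℝ →+* ℝ[X])).det := by
    have h0 : (1+L).map (C : ℝ →+* ℝ[X]) + (X : ℝ[X]) • H.map (C : ℝ →+* ℝ[X])
        = 1 + (L.map (C : ℝ →+* ℝ[X]) + (X : ℝ[X]) • H.map (C : ℝ →+* ℝ[X])) := by
      rw [Matrix.map_add _ (map_add C), Matrix.map_one _ (map_zero C) (map_one C), add_assoc]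
    rw [h0, det_one_add_eq_sum]
    refine Finset.sum_congr rfl fun J _ => ?_
    have hJ : ((L.map (C : ℝ →+* ℝ[X]) + (X : ℝ[X]) • H.map (C : ℝ →+* ℝ[X])).submatrix
          (fun i : J => (i : Fin N)) (fun j : J => (j : Fin N)))
        = (gsubm L J).map (C : ℝ →+* ℝ[X]) + (X : ℝ[X]) • (gsubm H J).map (C : ℝ →+* ℝ[X]) := by
      ext i j
      simp [gsubm, Matrix.submatrix_apply, Matrix.map_apply, Matrix.smul_apply, Matrix.add_apply]
    rw [hJ]
  have hc := congrArg (fun p => Polynomial.coeff p 2) hP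
  rw [coeff_two_det_add _ _ hDu, Polynomial.finset_sum_coeff] at hc
  simp only [fun J => coeff_two_det_add (gsubm L J) (gsubm H J) (hJu J)] at hc
  set D := (1 + L).det with hDdef
  set K := (1 + L)⁻¹ * H with hKdef
  have key : ∑ J : Finset (Fin N), ((gsubm L J).det / D) *
        (((gsubm L J)⁻¹ * gsubm H J).trace ^ 2
          - (((gsubm L J)⁻¹ * gsubm H J) * ((gsubm L J)⁻¹ * gsubm H J)).trace)
      = K.trace ^ 2 - (K * K).trace := by
    have h' : ∑ J : Finset (Fin N), ((gsubm L J).det / D) *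
          (((gsubm L J)⁻¹ * gsubm H J).trace ^ 2
            - (((gsubm L J)⁻¹ * gsubm H J) * ((gsubm L J)⁻¹ * gsubm H J)).trace)
        = (∑ J : Finset (Fin N), (gsubm L J).det *
            ((((gsubm L J)⁻¹ * gsubm H J).trace ^ 2
              - (((gsubm L J)⁻¹ * gsubm H J) * ((gsubm L J)⁻¹ * gsubm H J)).trace) / 2)) * (2 / D) := by
      rw [Finset.sum_mul]
      refine Finset.sum_congr rfl fun J _ => ?_
      field_simp
    rw [h', ← hc]
    field_simp
  have hexp : ∑ J : Finset (Fin N), ((gsubm L J).det / D) *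
        (((gsubm L J)⁻¹ * gsubm H J).trace ^ 2
          - (((gsubm L J)⁻¹ * gsubm H J) * ((gsubm L J)⁻¹ * gsubm H J)).trace)
      = ∑ J : Finset (Fin N), ((gsubm L J).det / D) * ((gsubm L J)⁻¹ * gsubm H J).trace ^ 2
        - ∑ J : Finset (Fin N), ((gsubm L J).det / D) *
            (((gsubm L J)⁻¹ * gsubm H J) * ((gsubm L J)⁻¹ * gsubm H J)).trace := by
    rw [← Finset.sum_sub_distrib]
    refine Finset.sum_congr rfl fun J _ => ?_
    ring
  simp only [trace_sq_eq]
  rw [hexp] at key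
  linarith [key]
end

section
/- Let Z be an L-ensemble with kernel L (i.e., P[Z = J] = det(L_J)/det(I+L)) and correlation kernel K = L(I+L)^{-1}. Then for all J ⊆ {1,...,N}, P[J ⊆ Z] = det(K_J). -/
open Matrix BigOperators

/-- If all rows outside `S` are standard basis rows, the determinant equals the
principal minor on `S`. -/
lemma det_eq_det_subm_rows {N : ℕ} (M : Matrix (Fin N) (Fin N) ℝ) (S : Finset (Fin N))
    (h : ∀ i, i ∉ S → ∀ j, M i j = if i = j then 1 else 0) :
    M.det = (subm M S).det := by
  classical
  let e := Equiv.sumCompl (fun i : Fin N => i ∈ S)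
  rw [← Matrix.det_submatrix_equiv_self e M]
  have hblock : M.submatrix e e =
      Matrix.fromBlocks (subm M S)
        (Matrix.of fun (i : {x : Fin N // x ∈ S}) (j : {x : Fin N // ¬ x ∈ S}) =>
          M (i : Fin N) (j : Fin N)) 0 1 := by
    ext i j
    cases i with
    | inl i =>
      cases j with
      | inl j => rfl
      | inr j => rfl
    | inr i =>
      cases j with
      | inl j =>
        have : (i : Fin N) ≠ (j : Fin N) := by
          intro hij
          exact i.2 (hij ▸ j.2)
        simp [Matrix.submatrix_apply, e, h (i : Fin N) i.2, this]
      | inr j =>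
        simp only [Matrix.submatrix_apply, e, Equiv.sumCompl_apply_inr,
          Matrix.fromBlocks_apply₂₂]
        rw [h (i : Fin N) i.2, Matrix.one_apply]
        by_cases hij : i = j
        · simp [hij]
        · have : (i : Fin N) ≠ (j : Fin N) := fun hc => hij (Subtype.ext hc)
          simp [hij, this]
  rw [hblock, Matrix.det_fromBlocks_zero₂₁, Matrix.det_one, mul_one]

/-- Column version. -/
lemma det_eq_det_subm_cols {N : ℕ} (M : Matrix (Fin N) (Fin N) ℝ) (S : Finset (Fin N))
    (h : ∀ j, j ∉ S → ∀ i, M i j = if i = j then 1 else 0) :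
    M.det = (subm M S).det := by
  rw [← Matrix.det_transpose M,
    det_eq_det_subm_rows Mᵀ S (by
      intro i hi j
      rw [Matrix.transpose_apply, h i hi j]
      simp [eq_comm])]
  have : subm Mᵀ S = (subm M S)ᵀ := rfl
  rw [this, Matrix.det_transpose]

/-- Expansion of `det (L + D)` with `D` the indicator diagonal of `Jᶜ` into
a sum of principal minors over supersets of `J`. -/
lemma det_add_compl_diag {N : ℕ} (L : Matrix (Fin N) (Fin N) ℝ) (J : Finset (Fin N)) :
    (L + Matrix.diagonal (fun i => if i ∈ J then (0 : ℝ) else 1)).det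
      = ∑ J' ∈ Finset.univ.filter (fun J' : Finset (Fin N) => J ⊆ J'), (subm L J').det := by
  classical
  set D := Matrix.diagonal (fun i => if i ∈ J then (0 : ℝ) else 1) with hD
  have hexp := (Matrix.detRowAlternating :
      (Fin N → ℝ) [⋀^Fin N]→ₗ[ℝ] ℝ).toMultilinearMap.map_add_univ L D
  have hLHS : (L + D).det = ∑ S : Finset (Fin N),
      (Matrix.of (S.piecewise L D)).det := hexp
  rw [hLHS, Finset.sum_filter]
  refine Finset.sum_congr rfl ?_
  intro S _
  by_cases hJS : J ⊆ S
  · rw [if_pos hJS]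
    have hrows : ∀ i, i ∉ S → ∀ j,
        (Matrix.of (S.piecewise L D)) i j = if i = j then 1 else 0 := by
      intro i hi j
      have hiJ : i ∉ J := fun hij => hi (hJS hij)
      simp [Finset.piecewise, hi, hD, Matrix.diagonal, hiJ]
    rw [det_eq_det_subm_rows _ S hrows]
    congr 1
    ext i j
    simp [subm, Finset.piecewise, i.2]
  · rw [if_neg hJS]
    obtain ⟨i, hiJ, hiS⟩ := Finset.not_subset.mp hJS
    apply Matrix.det_eq_zero_of_row_eq_zero i
    intro j
    simp [Finset.piecewise, hiS, hD, Matrix.diagonal, hiJ]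

/-- For the L-ensemble with kernel `L` (so `P[Z = J'] = det(L_{J'})/det(I+L)`) and
correlation kernel `K = L(I+L)⁻¹`, one has `P[J ⊆ Z] = det(K_J)` for all `J`. -/
theorem inclusion_prob_eq_corr_minor {N : ℕ} (L : Matrix (Fin N) (Fin N) ℝ)
    (hL : L.PosDef) (J : Finset (Fin N)) :
    ∑ J' ∈ Finset.univ.filter (fun J' : Finset (Fin N) => J ⊆ J'),
        (subm L J').det / (1 + L).det
      = (subm (L * (1 + L)⁻¹) J).det := by
  classical
  set A := 1 + L with hAdef
  have hA : A.PosDef := Matrix.PosDef.posSemidef_add Matrix.PosSemidef.one hL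
  have hdet : A.det ≠ 0 := hA.det_pos.ne'
  have hdetU : IsUnit A.det := isUnit_iff_ne_zero.mpr hdet
  have hAAinv : A * A⁻¹ = 1 := Matrix.mul_nonsing_inv A hdetU
  set D := Matrix.diagonal (fun i => if i ∈ J then (0 : ℝ) else 1) with hD
  set P := Matrix.diagonal (fun i => if i ∈ J then (1 : ℝ) else 0) with hP
  -- L + D = A * (1 - A⁻¹ * P)
  have hLD : L + D = A * (1 - A⁻¹ * P) := by
    rw [Matrix.mul_sub, Matrix.mul_one, ← Matrix.mul_assoc, hAAinv, Matrix.one_mul]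
    ext i j
    by_cases hij : i = j
    · subst hij
      by_cases hiJ : i ∈ J <;>
        simp [hD, hP, hAdef, Matrix.diagonal, Matrix.one_apply, hiJ, Matrix.add_apply,
          Matrix.sub_apply] <;> ring
    · simp [hD, hP, hAdef, Matrix.diagonal, Matrix.one_apply, hij, Matrix.add_apply,
        Matrix.sub_apply]
  -- columns of 1 - A⁻¹ * P outside J are standard basis columns
  have hcols : ∀ j, j ∉ J → ∀ i,
      (1 - A⁻¹ * P) i j = if i = j then 1 else 0 := by
    intro j hj i
    have : (A⁻¹ * P) i j = 0 := by
      simp [hP, Matrix.mul_diagonal, hj]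
    rw [Matrix.sub_apply, this, sub_zero, Matrix.one_apply]
  have hmid : (1 - A⁻¹ * P).det = (subm (L * A⁻¹) J).det := by
    rw [det_eq_det_subm_cols _ J hcols]
    congr 1
    have hLA : L * A⁻¹ = 1 - A⁻¹ := by
      have : L = A - 1 := by rw [hAdef]; abel
      rw [this, Matrix.sub_mul, hAAinv, Matrix.one_mul]
    ext i j
    have hjJ : (j : Fin N) ∈ J := j.2
    simp [subm, hLA, Matrix.sub_apply, hP, Matrix.mul_diagonal, hjJ]
  have hmain : (L + D).det = A.det * (subm (L * A⁻¹) J).det := by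
    rw [hLD, Matrix.det_mul, hmid]
  rw [← Finset.sum_div, ← det_add_compl_diag L J, ← hD, hmain, mul_div_assoc,
    mul_comm, div_mul_cancel₀ _ hdet]
end

section
/- Let L be an N×N symmetric positive definite matrix and let {J₁,...,J_k} be a partition of {1,...,N}. Then L is block diagonal with blocks J₁,...,J_k if and only if K = L(I+L)^{-1} is block diagonal with blocks J₁,...,J_k. -/
open Matrix BigOperators

/-- `A` is block diagonal with respect to the family of blocks `J`. -/
def IsBlockDiagonal {N k : ℕ} (A : Matrix (Fin N) (Fin N) ℝ)
    (J : Fin k → Finset (Fin N)) : Prop :=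
  ∀ (a b : Fin k) (i j : Fin N), a ≠ b → i ∈ J a → j ∈ J b → A i j = 0

section Aux

variable {N k : ℕ} (J : Fin k → Finset (Fin N))

lemma block_unique (hdisj : ∀ a b : Fin k, a ≠ b → Disjoint (J a) (J b))
    {a c : Fin k} {i : Fin N} (ha : i ∈ J a) (hc : i ∈ J c) : a = c := by
  by_contra h
  exact Finset.disjoint_left.mp (hdisj a c h) ha hc

lemma bd_mul {A B : Matrix (Fin N) (Fin N) ℝ}
    (hcover : ∀ i : Fin N, ∃ a : Fin k, i ∈ J a)
    (hA : IsBlockDiagonal A J) (hB : IsBlockDiagonal B J) :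
    IsBlockDiagonal (A * B) J := by
  intro a b i j hab hi hj
  rw [Matrix.mul_apply]
  apply Finset.sum_eq_zero
  intro l _
  obtain ⟨c, hc⟩ := hcover l
  by_cases h : c = a
  · subst h
    rw [hB c b l j hab hc hj, mul_zero]
  · rw [hA a c i l (fun h' => h h'.symm) hi hc, zero_mul]

lemma bd_one (hdisj : ∀ a b : Fin k, a ≠ b → Disjoint (J a) (J b)) :
    IsBlockDiagonal (1 : Matrix (Fin N) (Fin N) ℝ) J := by
  intro a b i j hab hi hj
  rw [Matrix.one_apply_ne]
  intro h; subst h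
  exact Finset.disjoint_left.mp (hdisj a b hab) hi hj

lemma bd_add {A B : Matrix (Fin N) (Fin N) ℝ}
    (hA : IsBlockDiagonal A J) (hB : IsBlockDiagonal B J) :
    IsBlockDiagonal (A + B) J := by
  intro a b i j hab hi hj
  rw [Matrix.add_apply, hA a b i j hab hi hj, hB a b i j hab hi hj, add_zero]

lemma bd_sub {A B : Matrix (Fin N) (Fin N) ℝ}
    (hA : IsBlockDiagonal A J) (hB : IsBlockDiagonal B J) :
    IsBlockDiagonal (A - B) J := by
  intro a b i j hab hi hj
  rw [Matrix.sub_apply, hA a b i j hab hi hj, hB a b i j hab hi hj, sub_zero]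

lemma bd_inv {A : Matrix (Fin N) (Fin N) ℝ}
    (hdisj : ∀ a b : Fin k, a ≠ b → Disjoint (J a) (J b))
    (hcover : ∀ i : Fin N, ∃ a : Fin k, i ∈ J a)
    (hdet : IsUnit A.det) (hA : IsBlockDiagonal A J) :
    IsBlockDiagonal A⁻¹ J := by
  set B : Matrix (Fin N) (Fin N) ℝ :=
    Matrix.of fun i j => if ∃ a, i ∈ J a ∧ j ∈ J a then A⁻¹ i j else 0 with hBdef
  have hAB : A * B = 1 := by
    ext i j
    obtain ⟨a, ha⟩ := hcover i
    obtain ⟨b, hb⟩ := hcover j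
    have hBcol : ∀ l, B l j = if l ∈ J b then A⁻¹ l j else 0 := by
      intro l
      simp only [hBdef, Matrix.of_apply]
      by_cases hl : l ∈ J b
      · rw [if_pos hl, if_pos ⟨b, hl, hb⟩]
      · rw [if_neg hl, if_neg]
        rintro ⟨c, hlc, hjc⟩
        exact hl ((block_unique J hdisj hb hjc) ▸ hlc)
    rw [Matrix.mul_apply]
    by_cases hab : a = b
    · subst hab
      have hfull := congrFun (congrFun (Matrix.mul_nonsing_inv A hdet) i) j
      rw [Matrix.mul_apply] at hfull
      rw [← hfull]
      apply Finset.sum_congr rfl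
      intro l _
      rw [hBcol l]
      by_cases hl : l ∈ J a
      · rw [if_pos hl]
      · rw [if_neg hl]
        obtain ⟨c, hc⟩ := hcover l
        have hca : c ≠ a := fun h => hl (h ▸ hc)
        simp [hA a c i l (fun h => hca h.symm) ha hc]
    · have h1 : (1 : Matrix (Fin N) (Fin N) ℝ) i j = 0 := by
        rw [Matrix.one_apply_ne]
        intro h; subst h
        exact hab (block_unique J hdisj ha hb)
      rw [h1]
      apply Finset.sum_eq_zero
      intro l _
      rw [hBcol l]
      by_cases hl : l ∈ J b
      · rw [if_pos hl, hA a b i l hab ha hl, zero_mul]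
      · rw [if_neg hl, mul_zero]
  have hinv : A⁻¹ = B := Matrix.inv_eq_right_inv hAB
  intro a b i j hab hi hj
  rw [hinv]
  simp only [hBdef, Matrix.of_apply]
  rw [if_neg]
  rintro ⟨c, hic, hjc⟩
  exact hab ((block_unique J hdisj hi hic).trans (block_unique J hdisj hj hjc).symm)

end Aux

/-- For `L` symmetric positive definite and `{J₁,...,J_k}` a partition of `[N]`,
`L` is block diagonal with blocks `J₁,...,J_k` iff `K = L(I+L)⁻¹` is. -/
theorem blockDiagonal_iff_corr_blockDiagonal {N k : ℕ}
    (L : Matrix (Fin N) (Fin N) ℝ) (hL : L.PosDef)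
    (J : Fin k → Finset (Fin N))
    (hdisj : ∀ a b : Fin k, a ≠ b → Disjoint (J a) (J b))
    (hcover : ∀ i : Fin N, ∃ a : Fin k, i ∈ J a) :
    IsBlockDiagonal L J ↔ IsBlockDiagonal (L * (1 + L)⁻¹) J := by
  have hP : (1 + L).PosDef := Matrix.PosDef.add Matrix.PosDef.one hL
  have hdet : IsUnit (1 + L).det := isUnit_iff_ne_zero.mpr hP.det_pos.ne'
  constructor
  · intro hLbd
    exact bd_mul J hcover hLbd
      (bd_inv J hdisj hcover hdet (bd_add J (bd_one J hdisj) hLbd))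
  · intro hK
    have hmul : (1 + L) * (1 + L)⁻¹ = 1 := Matrix.mul_nonsing_inv _ hdet
    have hKL : (1 : Matrix (Fin N) (Fin N) ℝ) - L * (1 + L)⁻¹ = (1 + L)⁻¹ := by
      have hright : (1 + L) * ((1 : Matrix (Fin N) (Fin N) ℝ) - L * (1 + L)⁻¹) = 1 := by
        have hc : (1 + L) * L = L * (1 + L) := by noncomm_ring
        rw [Matrix.mul_sub, Matrix.mul_one, ← Matrix.mul_assoc, hc,
          Matrix.mul_assoc, hmul, Matrix.mul_one, add_sub_cancel_right]
      exact (Matrix.inv_eq_right_inv hright).symm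
    have hdet2 : IsUnit ((1 : Matrix (Fin N) (Fin N) ℝ) - L * (1 + L)⁻¹).det := by
      rw [hKL]
      exact (Matrix.isUnit_nonsing_inv_det _ hdet)
    have hsubbd : IsBlockDiagonal ((1 : Matrix (Fin N) (Fin N) ℝ) - L * (1 + L)⁻¹) J :=
      bd_sub J (bd_one J hdisj) hK
    have hinvbd := bd_inv J hdisj hcover hdet2 hsubbd
    have heq : ((1 : Matrix (Fin N) (Fin N) ℝ) - L * (1 + L)⁻¹)⁻¹ = 1 + L := by
      rw [hKL, Matrix.nonsing_inv_nonsing_inv _ hdet]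
    rw [heq] at hinvbd
    have hLrw : L = (L * (1 + L)⁻¹) * (1 + L) := by
      rw [Matrix.mul_assoc, Matrix.nonsing_inv_mul _ hdet, Matrix.mul_one]
    rw [hLrw]
    exact bd_mul J hcover hK hinvbd
end

section
/- Let L* be symmetric positive definite with p*_J = det(L*_J)/det(I+L*), and define Φ(L) = ∑_J p*_J log det(L_J) − log det(I+L) on symmetric positive definite matrices. Then L* is a critical point of Φ: for every symmetric H, the directional derivative of Φ at L* in direction H is zero, i.e. ∑_J p*_J Tr((L*_J)^{-1} H_J) = Tr((I+L*)^{-1} H). -/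
open Matrix BigOperators

open Polynomial

section DetExpansion

variable {R : Type*} [CommRing R] {N : ℕ}

/-- General version of `subm` over any commutative ring. -/
def subR (L : Matrix (Fin N) (Fin N) R) (J : Finset (Fin N)) : Matrix J J R :=
  L.submatrix (fun i => (i : Fin N)) (fun j => (j : Fin N))

lemma det_rows_one (M : Matrix (Fin N) (Fin N) R) (t : Finset (Fin N)) :
    (Matrix.of fun i j =>
        if i ∈ t then M i j else (1 : Matrix (Fin N) (Fin N) R) i j).det
      = (subR M t).det := by
  classical
  set e := Equiv.sumCompl (fun i : Fin N => i ∈ t) with he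
  rw [← Matrix.det_submatrix_equiv_self e]
  have : (Matrix.of fun i j =>
      if i ∈ t then M i j else (1 : Matrix (Fin N) (Fin N) R) i j).submatrix e e
      = Matrix.fromBlocks (subR M t)
          (M.submatrix (fun i : {x // x ∈ t} => (i : Fin N)) (fun j : {x // ¬ x ∈ t} => (j : Fin N)))
          0 1 := by
    ext i j
    cases i with
    | inl i =>
      cases j with
      | inl j => simp [he, subR, i.2]
      | inr j => simp [he, i.2]
    | inr i =>
      cases j with
      | inl j =>
        have : (i : Fin N) ≠ (j : Fin N) := by
          intro h
          exact i.2 (h ▸ j.2)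
        simp [he, i.2, Matrix.one_apply_ne this]
      | inr j =>
        by_cases h : (i : Fin N) = (j : Fin N)
        · have hij : i = j := Subtype.ext h
          subst hij
          simp [he, i.2, Matrix.one_apply]
        · have : i ≠ j := fun hh => h (by rw [hh])
          simp [he, i.2, Matrix.one_apply_ne h, Matrix.one_apply_ne this]
  rw [this, Matrix.det_fromBlocks_zero₂₁, Matrix.det_one, mul_one]

/-- auxiliary matrix: rows in `s` come from `1 + M`, rows in `t` from `M`,
the rest from `1`. -/
def rmat (M : Matrix (Fin N) (Fin N) R) (s t : Finset (Fin N)) :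
    Matrix (Fin N) (Fin N) R :=
  Matrix.of fun i j =>
    if i ∈ s then (1 + M) i j else if i ∈ t then M i j
      else (1 : Matrix (Fin N) (Fin N) R) i j

lemma det_rmat (M : Matrix (Fin N) (Fin N) R) (s : Finset (Fin N)) :
    ∀ t : Finset (Fin N), Disjoint s t →
      (rmat M s t).det = ∑ J ∈ s.powerset, (subR M (J ∪ t)).det := by
  classical
  induction s using Finset.induction_on with
  | empty =>
    intro t _
    have : rmat M ∅ t = Matrix.of fun i j =>
        if i ∈ t then M i j else (1 : Matrix (Fin N) (Fin N) R) i j := by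
      ext i j; simp [rmat]
    rw [this, det_rows_one, Finset.powerset_empty, Finset.sum_singleton,
      Finset.empty_union]
  | @insert a s ha ih =>
    intro t hdisj
    rw [Finset.disjoint_insert_left] at hdisj
    obtain ⟨hat, hst⟩ := hdisj
    have h1 : rmat M (insert a s) t
        = Matrix.updateRow (rmat M s t) a ((1 : Matrix (Fin N) (Fin N) R) a + M a) := by
      ext i j
      by_cases hia : i = a
      · subst hia
        simp [rmat, Matrix.updateRow_self, ha]
      · simp [rmat, Matrix.updateRow_ne hia, Finset.mem_insert, hia]
    have e1 : Matrix.updateRow (rmat M s t) a ((1 : Matrix (Fin N) (Fin N) R) a)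
        = rmat M s t := by
      ext i j
      by_cases hia : i = a
      · subst hia
        simp [rmat, Matrix.updateRow_self, ha, hat]
      · simp [Matrix.updateRow_ne hia]
    have e2 : Matrix.updateRow (rmat M s t) a (M a) = rmat M s (insert a t) := by
      ext i j
      by_cases hia : i = a
      · subst hia
        simp [rmat, Matrix.updateRow_self, ha]
      · simp [rmat, Matrix.updateRow_ne hia, Finset.mem_insert, hia]
    have hst' : Disjoint s (insert a t) := by
      rw [Finset.disjoint_insert_right]
      exact ⟨ha, hst⟩
    rw [h1, Matrix.det_updateRow_add, e1, e2, ih t hst, ih (insert a t) hst',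
      Finset.sum_powerset_insert ha]
    congr 1
    apply Finset.sum_congr rfl
    intro J _
    rw [Finset.insert_union, Finset.union_insert]

lemma det_one_add_eq_sum_s10 (M : Matrix (Fin N) (Fin N) R) :
    (1 + M).det = ∑ J : Finset (Fin N), (subR M J).det := by
  classical
  have h : 1 + M = rmat M Finset.univ ∅ := by
    ext i j; simp [rmat]
  rw [h, det_rmat M Finset.univ ∅ (Finset.disjoint_empty_right _),
    Finset.powerset_univ]
  exact Finset.sum_congr rfl fun J _ => by rw [Finset.union_empty]

end DetExpansion

section Coeff

variable {n : Type*} [Fintype n] [DecidableEq n]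

lemma coeff_one_det (A B : Matrix n n ℝ) (hA : A.det ≠ 0) :
    (Matrix.det (A.map Polynomial.C + (Polynomial.X : ℝ[X]) • B.map Polynomial.C)).coeff 1
      = A.det * (A⁻¹ * B).trace := by
  have key : A.map (Polynomial.C : ℝ →+* ℝ[X]) + (X : ℝ[X]) • B.map Polynomial.C
      = A.map Polynomial.C * (1 + (X : ℝ[X]) • (A⁻¹ * B).map Polynomial.C) := by
    rw [Matrix.mul_add, Matrix.mul_one, Matrix.mul_smul, ← Matrix.map_mul,
      Matrix.mul_nonsing_inv_cancel_left _ _ hA.isUnit]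
  rw [key, Matrix.det_mul,
    show A.map ⇑(Polynomial.C : ℝ →+* ℝ[X]) = (Polynomial.C : ℝ →+* ℝ[X]).mapMatrix A from rfl,
    ← RingHom.map_det, Polynomial.coeff_C_mul, Matrix.coeff_det_one_add_X_smul_one]

end Coeff

section PosDefSub

lemma posdef_submatrix {n m : Type*} [Fintype n] [Fintype m]
    {M : Matrix n n ℝ} (hM : M.PosDef) (e : m → n) (he : Function.Injective e) :
    (M.submatrix e e).PosDef := by
  classical
  refine Matrix.PosDef.of_dotProduct_mulVec_pos ?_ ?_
  · have h := hM.1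
    rw [Matrix.IsHermitian] at h ⊢
    rw [Matrix.conjTranspose_submatrix, h]
  · intro x hx
    set g : n → ℝ := fun i => ∑ k, if e k = i then x k else 0 with hg
    have hge : ∀ k, g (e k) = x k := by
      intro k
      simp [hg, he.eq_iff]
    have hdot : ∀ h : n → ℝ, dotProduct g h = ∑ k, x k * h (e k) := by
      intro h
      simp only [dotProduct, hg, Finset.sum_mul, ite_mul, zero_mul]
      rw [Finset.sum_comm]
      exact Finset.sum_congr rfl fun k _ => by simp
    have hgne : g ≠ 0 := by
      intro h
      apply hx
      funext k
      have := hge k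
      rw [h] at this
      simpa using this.symm
    have key : dotProduct (star x) (M.submatrix e e *ᵥ x)
        = dotProduct (star g) (M *ᵥ g) := by
      rw [star_trivial, star_trivial, hdot (M *ᵥ g)]
      simp only [dotProduct, Matrix.mulVec, Matrix.submatrix_apply]
      refine Finset.sum_congr rfl fun k _ => ?_
      congr 1
      have hdt : (fun j => M (e k) j) ⬝ᵥ g = ∑ l, x l * M (e k) (e l) := by
        rw [dotProduct_comm, hdot]
      calc ∑ l, M (e k) (e l) * x l = ∑ l, x l * M (e k) (e l) := by
            exact Finset.sum_congr rfl fun l _ => mul_comm _ _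
        _ = (fun j => M (e k) j) ⬝ᵥ g := hdt.symm
        _ = ∑ j, M (e k) j * g j := rfl
    rw [key]
    exact hM.dotProduct_mulVec_pos hgne

end PosDefSub

/-- First-order condition: `L*` is a critical point of the expected log-likelihood,
i.e. `∑_J p*_J Tr((L*_J)⁻¹ H_J) = Tr((I+L*)⁻¹ H)` for every symmetric `H`. -/
theorem first_order_condition {N : ℕ} (Lstar : Matrix (Fin N) (Fin N) ℝ)
    (hL : Lstar.PosDef) (H : Matrix (Fin N) (Fin N) ℝ) (hH : H.IsSymm) :
    ∑ J : Finset (Fin N),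
        ((subm Lstar J).det / (1 + Lstar).det) *
          ((subm Lstar J)⁻¹ * subm H J).trace
      = ((1 + Lstar)⁻¹ * H).trace := by
  classical
  have hdet1 : (1 + Lstar).det ≠ 0 := by
    have h1 : (1 + Lstar).PosDef := Matrix.PosDef.add Matrix.PosDef.one hL
    exact ne_of_gt h1.det_pos
  have hdetJ : ∀ J : Finset (Fin N), (subm Lstar J).det ≠ 0 := by
    intro J
    have hPD : (subm Lstar J).PosDef :=
      posdef_submatrix hL (fun i : J => (i : Fin N)) Subtype.coe_injective
    exact ne_of_gt hPD.det_pos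
  have expand := det_one_add_eq_sum_s10 (R := ℝ[X])
    (Lstar.map Polynomial.C + (Polynomial.X : ℝ[X]) • H.map Polynomial.C)
  have lhsEq : (1 : Matrix (Fin N) (Fin N) ℝ[X])
        + (Lstar.map Polynomial.C + (Polynomial.X : ℝ[X]) • H.map Polynomial.C)
      = (1 + Lstar).map Polynomial.C + (Polynomial.X : ℝ[X]) • H.map Polynomial.C := by
    rw [Matrix.map_add _ (fun a b => map_add Polynomial.C a b), Matrix.map_one _ Polynomial.C_0 Polynomial.C_1, add_assoc]
  have submEq : ∀ J : Finset (Fin N),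
      subR (Lstar.map Polynomial.C + (Polynomial.X : ℝ[X]) • H.map Polynomial.C) J
        = (subm Lstar J).map Polynomial.C
            + (Polynomial.X : ℝ[X]) • (subm H J).map Polynomial.C := by
    intro J
    ext i j
    simp [subR, subm]
  rw [lhsEq] at expand
  have hcoeff := congrArg (fun p => Polynomial.coeff p 1) expand
  simp only [Polynomial.finset_sum_coeff] at hcoeff
  rw [coeff_one_det _ _ hdet1] at hcoeff
  have hterm : ∀ J ∈ (Finset.univ : Finset (Finset (Fin N))),
      (subR (Lstar.map Polynomial.C + (Polynomial.X : ℝ[X]) • H.map Polynomial.C) J).det.coeff 1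
        = (subm Lstar J).det * ((subm Lstar J)⁻¹ * subm H J).trace := by
    intro J _
    rw [submEq J, coeff_one_det _ _ (hdetJ J)]
  rw [Finset.sum_congr rfl hterm] at hcoeff
  have step : ∑ J : Finset (Fin N),
      ((subm Lstar J).det / (1 + Lstar).det) * ((subm Lstar J)⁻¹ * subm H J).trace
      = (∑ J : Finset (Fin N),
          (subm Lstar J).det * ((subm Lstar J)⁻¹ * subm H J).trace) / (1 + Lstar).det := by
    rw [Finset.sum_div]
    exact Finset.sum_congr rfl fun J _ => by ring
  rw [step, ← hcoeff, mul_comm, mul_div_assoc, div_self hdet1, mul_one]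
end

section
/- Let Z be an L-ensemble with symmetric positive definite kernel L*, and H a symmetric matrix. The second directional derivative of the expected log-likelihood Φ at L* in direction H satisfies d²Φ(L*)(H,H) = −Var[Tr((L*_Z)^{-1} H_Z)]. In particular, d²Φ(L*)(H,H) ≤ 0 for all symmetric H. -/
open Matrix BigOperators

/-- Probability weights `p*_J = det(L*_J)/det(I+L*)`. -/
noncomputable def pstar {N : ℕ} (Lstar : Matrix (Fin N) (Fin N) ℝ)
    (J : Finset (Fin N)) : ℝ :=
  (subm Lstar J).det / (1 + Lstar).det

/-- The random variable `J ↦ Tr((L*_J)⁻¹ H_J)`. -/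
noncomputable def traceRV {N : ℕ} (Lstar H : Matrix (Fin N) (Fin N) ℝ)
    (J : Finset (Fin N)) : ℝ :=
  ((subm Lstar J)⁻¹ * subm H J).trace

variable {n : Type*} [Fintype n] [DecidableEq n]

def psub (M : Matrix n n ℝ) (J : Finset n) : Matrix J J ℝ :=
  M.submatrix (fun i => (i : n)) (fun j => (j : n))

lemma det_piecewise (M : Matrix n n ℝ) (s : Finset n) :
    Matrix.detRowAlternating (s.piecewise (M : n → n → ℝ) (1 : Matrix n n ℝ)) = (psub M s).det := by
  classical
  have : Matrix.detRowAlternating (s.piecewise (M : n → n → ℝ) (1 : Matrix n n ℝ))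
      = (Matrix.of (s.piecewise (M : n → n → ℝ) (1 : Matrix n n ℝ))).det := rfl
  rw [this]
  let e : {a // a ∈ s} ⊕ {a // ¬ a ∈ s} ≃ n := Equiv.sumCompl (· ∈ s)
  rw [← Matrix.det_submatrix_equiv_self e]
  have hB : (Matrix.of (s.piecewise (M : n → n → ℝ) (1 : Matrix n n ℝ))).submatrix e e
      = Matrix.fromBlocks (psub M s)
          (M.submatrix (fun i : {a // a ∈ s} => (i : n)) (fun j : {a // ¬ a ∈ s} => (j : n)))
          0 1 := by
    ext i j
    cases i with
    | inl i =>
      cases j with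
      | inl j =>
        simp [e, Matrix.submatrix_apply, Finset.piecewise, i.2, psub]
      | inr j =>
        simp [e, Matrix.submatrix_apply, Finset.piecewise, i.2]
    | inr i =>
      cases j with
      | inl j =>
        simp only [e, Matrix.submatrix_apply, Equiv.sumCompl_apply_inr, Equiv.sumCompl_apply_inl,
          Matrix.of_apply, Finset.piecewise, if_neg i.2, Matrix.fromBlocks_apply₂₁]
        exact Matrix.one_apply_ne (fun h => i.2 (h ▸ j.2))
      | inr j =>
        simp only [e, Matrix.submatrix_apply, Equiv.sumCompl_apply_inr, Matrix.of_apply,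
          Finset.piecewise, if_neg i.2, Matrix.fromBlocks_apply₂₂]
        by_cases h : i = j
        · subst h; simp [Matrix.one_apply]
        · rw [Matrix.one_apply_ne h, Matrix.one_apply_ne (fun hh : (i:n) = (j:n) => h (Subtype.ext hh))]
  rw [hB, Matrix.det_fromBlocks_zero₂₁]
  simp

lemma det_one_add_sum (M : Matrix n n ℝ) :
    (1 + M).det = ∑ s : Finset n, (psub M s).det := by
  classical
  have h0 : (1 + M).det
      = Matrix.detRowAlternating ((M : n → n → ℝ) + ((1 : Matrix n n ℝ) : n → n → ℝ)) := by
    have : ((M : n → n → ℝ) + ((1 : Matrix n n ℝ) : n → n → ℝ)) = ((1 + M : Matrix n n ℝ) : n → n → ℝ) := by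
      funext i j
      exact add_comm _ _
    rw [this]
    rfl
  rw [h0]
  exact (MultilinearMap.map_add_univ (Matrix.detRowAlternating (R := ℝ) (n := n)).toMultilinearMap
    (M : n → n → ℝ) ((1 : Matrix n n ℝ) : n → n → ℝ)).trans
    (Finset.sum_congr rfl fun s _ => det_piecewise M s)

lemma det_one_add_smul_sum (t : ℝ) (M : Matrix n n ℝ) :
    (1 + t • M).det = ∑ s : Finset n, t ^ s.card * (psub M s).det := by
  rw [det_one_add_sum]
  refine Finset.sum_congr rfl fun s _ => ?_
  have h : psub (t • M) s = t • psub M s := rfl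
  rw [h, Matrix.det_smul, Fintype.card_coe]

noncomputable def pdet (M : Matrix n n ℝ) : Polynomial ℝ :=
  ∑ s : Finset n, Polynomial.C ((psub M s).det) * Polynomial.X ^ s.card

lemma eval_pdet (t : ℝ) (M : Matrix n n ℝ) : (pdet M).eval t = (1 + t • M).det := by
  rw [det_one_add_smul_sum, pdet, Polynomial.eval_finset_sum]
  refine Finset.sum_congr rfl fun s _ => ?_
  rw [Polynomial.eval_mul, Polynomial.eval_C, Polynomial.eval_pow, Polynomial.eval_X, mul_comm]

lemma coeff_pdet (M : Matrix n n ℝ) (k : ℕ) :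
    (pdet M).coeff k = ∑ s ∈ Finset.univ.filter (fun s : Finset n => s.card = k), (psub M s).det := by
  rw [pdet, Polynomial.finset_sum_coeff, Finset.sum_filter]
  refine Finset.sum_congr rfl fun s _ => ?_
  rw [Polynomial.coeff_C_mul, Polynomial.coeff_X_pow]
  by_cases h : s.card = k
  · simp [h]
  · simp [h, Ne.symm h]

lemma sum_card_one (M : Matrix n n ℝ) :
    ∑ s ∈ Finset.univ.filter (fun s : Finset n => s.card = 1), (psub M s).det = M.trace := by
  have h1 : Finset.univ.filter (fun s : Finset n => s.card = 1)
      = Finset.powersetCard 1 (Finset.univ : Finset n) := by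
    ext s; simp [Finset.mem_powersetCard_univ]
  rw [h1, Finset.powersetCard_one, Finset.sum_map, Matrix.trace]
  refine Finset.sum_congr rfl fun i _ => ?_
  show (psub M {i}).det = M.diag i
  haveI : Unique (↥({i} : Finset n)) :=
    ⟨⟨⟨i, Finset.mem_singleton_self i⟩⟩, fun a => Subtype.ext (Finset.mem_singleton.mp a.2)⟩
  rw [Matrix.det_unique]
  have hd : ((default : ↥({i} : Finset n)) : n) = i := Finset.mem_singleton.mp (Subtype.prop _)
  show M ((default : ↥({i} : Finset n)) : n) ((default : ↥({i} : Finset n)) : n) = M.diag i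
  rw [hd]
  rfl

lemma det_psub_pair (M : Matrix n n ℝ) {a b : n} (hab : a ≠ b) :
    (psub M {a, b}).det = M a a * M b b - M a b * M b a := by
  have ha : a ∈ ({a, b} : Finset n) := by simp
  have hb : b ∈ ({a, b} : Finset n) := by simp
  let e : Fin 2 ≃ ↥({a, b} : Finset n) :=
    { toFun := ![⟨a, ha⟩, ⟨b, hb⟩]
      invFun := fun x => if (x : n) = a then 0 else 1
      left_inv := by
        intro x
        fin_cases x
        · simp
        · simp [hab.symm]
      right_inv := by
        rintro ⟨x, hx⟩
        rcases Finset.mem_insert.mp hx with h | h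
        · subst h; simp
        · have hxb := Finset.mem_singleton.mp h
          subst hxb
          simp [hab.symm] }
  rw [← Matrix.det_submatrix_equiv_self e, Matrix.det_fin_two]
  simp [e, psub, Matrix.submatrix_apply]

lemma sum_card_two [LinearOrder n] (M : Matrix n n ℝ) :
    ∑ s ∈ Finset.univ.filter (fun s : Finset n => s.card = 2), (psub M s).det
      = (M.trace ^ 2 - (M * M).trace) / 2 := by
  classical
  set g : n → n → ℝ := fun i j => M i i * M j j - M i j * M j i with hg
  set P : Finset (n × n) :=
    (Finset.univ ×ˢ Finset.univ).filter (fun p : n × n => p.1 < p.2) with hP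
  have key : ∑ p ∈ P, g p.1 p.2
      = ∑ s ∈ Finset.univ.filter (fun s : Finset n => s.card = 2), (psub M s).det := by
    refine Finset.sum_bij' (fun p _ => ({p.1, p.2} : Finset n))
      (fun s hs => (s.min' ?_, s.max' ?_)) ?_ ?_ ?_ ?_ ?_
    · exact Finset.card_pos.mp (by rw [(Finset.mem_filter.mp hs).2]; norm_num)
    · exact Finset.card_pos.mp (by rw [(Finset.mem_filter.mp hs).2]; norm_num)
    · intro p hp
      have hlt : p.1 < p.2 := (Finset.mem_filter.mp hp).2
      simp [Finset.card_pair hlt.ne]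
    · intro s hs
      have hcard : s.card = 2 := (Finset.mem_filter.mp hs).2
      have hlt := Finset.min'_lt_max'_of_card s (by omega)
      simp [hP, hlt]
    · intro p hp
      have hlt : p.1 < p.2 := (Finset.mem_filter.mp hp).2
      have h1 : ({p.1, p.2} : Finset n).min' (Finset.insert_nonempty _ _) = p.1 := by
        refine le_antisymm (Finset.min'_le _ _ (by simp)) (Finset.le_min' _ _ _ ?_)
        intro y hy
        rcases Finset.mem_insert.mp hy with h | h
        · exact h.ge
        · rw [Finset.mem_singleton.mp h]; exact hlt.le
      have h2 : ({p.1, p.2} : Finset n).max' (Finset.insert_nonempty _ _) = p.2 := by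
        refine le_antisymm (Finset.max'_le _ _ _ ?_) (Finset.le_max' _ _ (by simp))
        intro y hy
        rcases Finset.mem_insert.mp hy with h | h
        · rw [h]; exact hlt.le
        · exact (Finset.mem_singleton.mp h).le
      exact Prod.ext h1 h2
    · intro s hs
      have hcard : s.card = 2 := (Finset.mem_filter.mp hs).2
      have hne : s.Nonempty := Finset.card_pos.mp (by omega)
      have hlt := Finset.min'_lt_max'_of_card s (by omega)
      refine Finset.eq_of_subset_of_card_le ?_ ?_
      · show ({s.min' hne, s.max' hne} : Finset n) ⊆ s
        exact Finset.insert_subset (Finset.min'_mem s hne)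
          (Finset.singleton_subset_iff.mpr (Finset.max'_mem s hne))
      · show s.card ≤ ({s.min' hne, s.max' hne} : Finset n).card
        rw [Finset.card_pair hlt.ne, hcard]
    · intro p hp
      have hlt : p.1 < p.2 := (Finset.mem_filter.mp hp).2
      rw [det_psub_pair M hlt.ne]
  have expand : M.trace ^ 2 - (M * M).trace = ∑ p ∈ Finset.univ ×ˢ Finset.univ, g p.1 p.2 := by
    have h1 : M.trace ^ 2 = ∑ i : n, ∑ j : n, M i i * M j j := by
      rw [Matrix.trace, sq, Finset.sum_mul_sum]
      rfl
    have h2 : (M * M).trace = ∑ i : n, ∑ j : n, M i j * M j i := by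
      simp [Matrix.trace, Matrix.diag, Matrix.mul_apply]
    rw [Finset.sum_product, h1, h2, ← Finset.sum_sub_distrib]
    exact Finset.sum_congr rfl fun i _ => by rw [← Finset.sum_sub_distrib]
  have hdiagzero : ∀ p : n × n, p.1 = p.2 → g p.1 p.2 = 0 := by
    rintro ⟨x, y⟩ h
    simp only at h
    subst h
    simp [hg]
  have h3 : ∑ p ∈ (Finset.univ ×ˢ Finset.univ).filter (fun p : n × n => ¬ p.1 < p.2), g p.1 p.2
      = ∑ p ∈ (Finset.univ ×ˢ Finset.univ).filter (fun p : n × n => p.2 < p.1), g p.1 p.2 := by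
    refine (Finset.sum_subset ?_ ?_).symm
    · intro p hp
      rcases Finset.mem_filter.mp hp with ⟨hmem, hlt2⟩
      exact Finset.mem_filter.mpr ⟨hmem, not_lt_of_gt hlt2⟩
    · intro p hp hnp
      have h1 := (Finset.mem_filter.mp hp).2
      have : ¬ p.2 < p.1 := fun hc => hnp (Finset.mem_filter.mpr ⟨(Finset.mem_filter.mp hp).1, hc⟩)
      exact hdiagzero p (le_antisymm (not_lt.mp this) (not_lt.mp h1))
  have h4 : ∑ p ∈ (Finset.univ ×ˢ Finset.univ).filter (fun p : n × n => p.2 < p.1), g p.1 p.2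
      = ∑ p ∈ P, g p.1 p.2 := by
    refine Finset.sum_nbij' Prod.swap Prod.swap ?_ ?_ ?_ ?_ ?_
    · intro p hp; simp only [hP, Finset.mem_filter, Finset.mem_product] at *; exact ⟨⟨Finset.mem_univ _, Finset.mem_univ _⟩, hp.2⟩
    · intro p hp; simp only [hP, Finset.mem_filter, Finset.mem_product] at *; exact ⟨⟨Finset.mem_univ _, Finset.mem_univ _⟩, hp.2⟩
    · intro p _; rfl
    · intro p _; rfl
    · intro p _; simp [hg]; ring
  have hsplit := Finset.sum_filter_add_sum_filter_not (Finset.univ ×ˢ Finset.univ)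
    (fun p : n × n => p.1 < p.2) (fun p => g p.1 p.2)
  rw [← key]
  have : ∑ p ∈ Finset.univ ×ˢ Finset.univ, g p.1 p.2 = 2 * ∑ p ∈ P, g p.1 p.2 := by
    rw [← hsplit, h3, h4]; ring
  rw [expand, this]
  ring

lemma posDef_psub {M : Matrix n n ℝ} (hM : M.PosDef) (J : Finset n) : (psub M J).PosDef := by
  classical
  rw [Matrix.posDef_iff_dotProduct_mulVec]
  constructor
  · ext i j
    have := congrFun (congrFun hM.1 (j : n)) (i : n)
    simpa [Matrix.conjTranspose_apply, psub] using this.symm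
  · intro x hx
    set y : n → ℝ := fun j => if h : j ∈ J then x ⟨j, h⟩ else 0 with hy
    have hyval : ∀ i : ↥J, y (i : n) = x i := by
      rintro ⟨i, hi⟩
      simp [hy, hi]
    have hyzero : ∀ j : n, j ∉ J → y j = 0 := by
      intro j hj; simp [hy, hj]
    have hyne : y ≠ 0 := by
      intro h
      apply hx
      funext i
      have := congrFun h (i : n)
      rw [hyval i] at this
      exact this
    have hpos := hM.dotProduct_mulVec_pos hyne
    have hinner : ∀ j : n, (M *ᵥ y) j = ∑ k : ↥J, M j (k : n) * x k := by
      intro j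
      show ∑ k : n, M j k * y k = _
      calc ∑ k : n, M j k * y k
          = ∑ k ∈ J, M j k * y k :=
            (Finset.sum_subset (Finset.subset_univ J)
              (fun k _ hk => by rw [hyzero k hk, mul_zero])).symm
        _ = ∑ k ∈ J.attach, M j (k : n) * y (k : n) := (Finset.sum_attach J _).symm
        _ = ∑ k : ↥J, M j (k : n) * x k := by
            rw [Finset.univ_eq_attach]
            exact Finset.sum_congr rfl fun k _ => by rw [hyval k]
    have heq : dotProduct (star y) (M *ᵥ y) = dotProduct (star x) (psub M J *ᵥ x) := by
      show ∑ j : n, star (y j) * (M *ᵥ y) j = ∑ i : ↥J, star (x i) * (psub M J *ᵥ x) i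
      calc ∑ j : n, star (y j) * (M *ᵥ y) j
          = ∑ j ∈ J, star (y j) * (M *ᵥ y) j :=
            (Finset.sum_subset (Finset.subset_univ J)
              (fun k _ hk => by rw [hyzero k hk]; simp)).symm
        _ = ∑ j ∈ J.attach, star (y (j : n)) * (M *ᵥ y) (j : n) := (Finset.sum_attach J _).symm
        _ = ∑ i : ↥J, star (x i) * (psub M J *ᵥ x) i := by
            rw [Finset.univ_eq_attach]
            refine Finset.sum_congr rfl fun j _ => ?_
            rw [hyval j, hinner (j : n)]
            rfl
    rw [← heq]
    exact hpos

/-- The second directional derivative of the expected log-likelihood at `L*`,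
`d²Φ(L*)(H,H) = −∑_J p*_J Tr((L*_J⁻¹ H_J)²) + Tr(((I+L*)⁻¹H)²)`, equals minus the
variance of `Tr((L*_Z)⁻¹ H_Z)` under `Z ~ DPP(L*)`; in particular it is `≤ 0`. -/
theorem second_derivative_eq_neg_variance {N : ℕ}
    (Lstar : Matrix (Fin N) (Fin N) ℝ) (hL : Lstar.PosDef)
    (H : Matrix (Fin N) (Fin N) ℝ) (hH : H.IsSymm) :
    (-∑ J : Finset (Fin N),
          pstar Lstar J * (((subm Lstar J)⁻¹ * subm H J) ^ 2).trace
        + (((1 + Lstar)⁻¹ * H) ^ 2).trace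
      = -(∑ J : Finset (Fin N), pstar Lstar J * (traceRV Lstar H J) ^ 2
          - (∑ J : Finset (Fin N), pstar Lstar J * traceRV Lstar H J) ^ 2)) ∧
    (-∑ J : Finset (Fin N),
          pstar Lstar J * (((subm Lstar J)⁻¹ * subm H J) ^ 2).trace
        + (((1 + Lstar)⁻¹ * H) ^ 2).trace ≤ 0) := by
  classical
  have hPD1L : (1 + Lstar).PosDef := Matrix.PosDef.add Matrix.PosDef.one hL
  have hD : 0 < (1 + Lstar).det := hPD1L.det_pos
  have hdJ : ∀ J : Finset (Fin N), 0 < (psub Lstar J).det :=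
    fun J => (posDef_psub hL J).det_pos
  have hUD : IsUnit (1 + Lstar).det := isUnit_iff_ne_zero.mpr hD.ne'
  have hUJ : ∀ J : Finset (Fin N), IsUnit (psub Lstar J).det :=
    fun J => isUnit_iff_ne_zero.mpr (hdJ J).ne'
  set Y : Matrix (Fin N) (Fin N) ℝ := (1 + Lstar)⁻¹ * H with hY
  set X : ∀ J : Finset (Fin N), Matrix J J ℝ :=
    fun J => (psub Lstar J)⁻¹ * psub H J with hX
  have master : ∀ t : ℝ,
      ∑ J : Finset (Fin N), (psub Lstar J).det * (1 + t • X J).det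
        = (1 + Lstar).det * (1 + t • Y).det := by
    intro t
    have hJ : ∀ J : Finset (Fin N),
        (psub Lstar J).det * (1 + t • X J).det = (psub (Lstar + t • H) J).det := by
      intro J
      rw [← Matrix.det_mul]
      congr 1
      simp only [hX]
      rw [Matrix.mul_add, Matrix.mul_one, mul_smul_comm,
        Matrix.mul_nonsing_inv_cancel_left _ _ (hUJ J)]
      rfl
    rw [Finset.sum_congr rfl (fun J _ => hJ J), ← det_one_add_sum (Lstar + t • H),
      ← Matrix.det_mul]
    congr 1
    simp only [hY]
    rw [Matrix.mul_add, Matrix.mul_one, mul_smul_comm,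
      Matrix.mul_nonsing_inv_cancel_left _ _ hUD, add_assoc]
  have polyeq : (∑ J : Finset (Fin N), Polynomial.C ((psub Lstar J).det) * pdet (X J))
      = Polynomial.C ((1 + Lstar).det) * pdet Y := by
    apply Polynomial.funext
    intro t
    rw [Polynomial.eval_finset_sum]
    simp only [Polynomial.eval_mul, Polynomial.eval_C, eval_pdet]
    exact master t
  have hcoeff : ∀ k : ℕ,
      ∑ J : Finset (Fin N), (psub Lstar J).det * (pdet (X J)).coeff k
        = (1 + Lstar).det * (pdet Y).coeff k := by
    intro k
    have := congrArg (fun p => Polynomial.coeff p k) polyeq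
    simpa [Polynomial.finset_sum_coeff, Polynomial.coeff_C_mul] using this
  have h1 : ∑ J : Finset (Fin N), (psub Lstar J).det * (X J).trace
      = (1 + Lstar).det * Y.trace := by
    have := hcoeff 1
    simpa only [coeff_pdet, sum_card_one] using this
  have h2 : ∑ J : Finset (Fin N), (psub Lstar J).det * (((X J).trace ^ 2 - (X J * X J).trace) / 2)
      = (1 + Lstar).det * ((Y.trace ^ 2 - (Y * Y).trace) / 2) := by
    have := hcoeff 2
    simpa only [coeff_pdet, sum_card_two] using this
  have h2' : ∑ J : Finset (Fin N), (psub Lstar J).det * ((X J).trace ^ 2 - (X J * X J).trace)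
      = (1 + Lstar).det * (Y.trace ^ 2 - (Y * Y).trace) := by
    have e1 : ∑ J : Finset (Fin N), (psub Lstar J).det * ((X J).trace ^ 2 - (X J * X J).trace)
        = 2 * ∑ J : Finset (Fin N),
            (psub Lstar J).det * (((X J).trace ^ 2 - (X J * X J).trace) / 2) := by
      rw [Finset.mul_sum]
      exact Finset.sum_congr rfl fun J _ => by ring
    rw [e1, h2]
    ring
  have hpstar : ∀ J : Finset (Fin N), pstar Lstar J = (psub Lstar J).det / (1 + Lstar).det :=
    fun J => rfl
  have htRV : ∀ J : Finset (Fin N), traceRV Lstar H J = (X J).trace := fun J => rfl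
  have hXgoal : ∀ J : Finset (Fin N), (subm Lstar J)⁻¹ * subm H J = X J := fun J => rfl
  have hp0 : ∀ J : Finset (Fin N), 0 ≤ pstar Lstar J :=
    fun J => by rw [hpstar J]; exact le_of_lt (div_pos (hdJ J) hD)
  have hp1 : ∑ J : Finset (Fin N), pstar Lstar J = 1 := by
    rw [Finset.sum_congr rfl fun J _ => hpstar J, ← Finset.sum_div,
      ← det_one_add_sum Lstar, div_self hD.ne']
  have hmean : ∑ J : Finset (Fin N), pstar Lstar J * traceRV Lstar H J = Y.trace := by
    have heq : ∑ J : Finset (Fin N), pstar Lstar J * traceRV Lstar H J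
        = (∑ J : Finset (Fin N), (psub Lstar J).det * (X J).trace) / (1 + Lstar).det := by
      rw [Finset.sum_div]
      exact Finset.sum_congr rfl fun J _ => by rw [hpstar J, htRV J]; ring
    rw [heq, h1, mul_comm, mul_div_assoc, div_self hD.ne', mul_one]
  have hsec : ∑ J : Finset (Fin N),
      pstar Lstar J * ((traceRV Lstar H J) ^ 2 - (X J * X J).trace)
      = Y.trace ^ 2 - (Y * Y).trace := by
    have heq : ∑ J : Finset (Fin N), pstar Lstar J * ((traceRV Lstar H J) ^ 2 - (X J * X J).trace)
        = (∑ J : Finset (Fin N), (psub Lstar J).det * ((X J).trace ^ 2 - (X J * X J).trace))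
            / (1 + Lstar).det := by
      rw [Finset.sum_div]
      exact Finset.sum_congr rfl fun J _ => by rw [hpstar J, htRV J]; ring
    rw [heq, h2', mul_comm, mul_div_assoc, div_self hD.ne', mul_one]
  have hsplit : ∑ J : Finset (Fin N),
      pstar Lstar J * ((traceRV Lstar H J) ^ 2 - (X J * X J).trace)
      = (∑ J : Finset (Fin N), pstar Lstar J * (traceRV Lstar H J) ^ 2)
        - ∑ J : Finset (Fin N), pstar Lstar J * (X J * X J).trace := by
    rw [← Finset.sum_sub_distrib]
    exact Finset.sum_congr rfl fun J _ => by ring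
  have hXsq : ∀ J : Finset (Fin N),
      (((subm Lstar J)⁻¹ * subm H J) ^ 2).trace = (X J * X J).trace := by
    intro J
    rw [hXgoal J, pow_two]
  have hYsq : (((1 + Lstar)⁻¹ * H) ^ 2).trace = (Y * Y).trace := by rw [← hY, pow_two]
  have main_eq : -∑ J : Finset (Fin N),
          pstar Lstar J * (((subm Lstar J)⁻¹ * subm H J) ^ 2).trace
        + (((1 + Lstar)⁻¹ * H) ^ 2).trace
      = -(∑ J : Finset (Fin N), pstar Lstar J * (traceRV Lstar H J) ^ 2
          - (∑ J : Finset (Fin N), pstar Lstar J * traceRV Lstar H J) ^ 2) := by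
    rw [Finset.sum_congr rfl fun J _ => by rw [hXsq J], hYsq, hmean]
    have hs := hsec
    rw [hsplit] at hs
    linarith [hs]
  refine ⟨main_eq, ?_⟩
  rw [main_eq]
  have hnn : 0 ≤ ∑ J : Finset (Fin N), pstar Lstar J *
      (traceRV Lstar H J - ∑ K : Finset (Fin N), pstar Lstar K * traceRV Lstar H K) ^ 2 :=
    Finset.sum_nonneg fun J _ => mul_nonneg (hp0 J) (sq_nonneg _)
  have e1 : ∑ J : Finset (Fin N), pstar Lstar J *
      (traceRV Lstar H J - ∑ K : Finset (Fin N), pstar Lstar K * traceRV Lstar H K) ^ 2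
      = ∑ J : Finset (Fin N), (pstar Lstar J * traceRV Lstar H J ^ 2
          - 2 * (∑ K : Finset (Fin N), pstar Lstar K * traceRV Lstar H K)
              * (pstar Lstar J * traceRV Lstar H J)
          + (∑ K : Finset (Fin N), pstar Lstar K * traceRV Lstar H K) ^ 2 * pstar Lstar J) :=
    Finset.sum_congr rfl fun J _ => by ring
  rw [e1, Finset.sum_add_distrib, Finset.sum_sub_distrib, ← Finset.mul_sum, ← Finset.mul_sum,
    hp1] at hnn
  nlinarith [hnn]
end

section
/- Let L* be symmetric positive definite and H symmetric. If Tr((L*_J)^{-1} H_J) = 0 for all J ⊆ {1,...,N}, then H_{ij} = 0 for every pair i, j that lie in the same connected component of the graph on {1,...,N} with edges {i,j} whenever L*_{ij} ≠ 0. -/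
open Matrix BigOperators

/-- `i` and `j` are connected in the determinantal graph of `L`
(edges `{i,j}` whenever `L i j ≠ 0`). -/
def ConnectedIn {N : ℕ} (L : Matrix (Fin N) (Fin N) ℝ) (i j : Fin N) : Prop :=
  Relation.ReflTransGen (fun a b => L a b ≠ 0) i j


-- test auxiliary lemmas
lemma sum_pull {N m : ℕ} (e : Fin m → Fin N) (x : Fin m → ℝ) (g : Fin N → ℝ) :
    ∑ a, (∑ s, if a = e s then x s else 0) * g a = ∑ s, x s * g (e s) := by
  simp_rw [Finset.sum_mul, ite_mul, zero_mul]
  rw [Finset.sum_comm]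
  simp

lemma posdef_submatrix_s12 {N m : ℕ} {L : Matrix (Fin N) (Fin N) ℝ} (hL : L.PosDef)
    (e : Fin m → Fin N) (he : Function.Injective e) : (L.submatrix e e).PosDef := by
  refine posDef_iff_dotProduct_mulVec.mpr ⟨hL.isHermitian.submatrix e, fun x hx => ?_⟩
  set y : Fin N → ℝ := fun a => ∑ s, if a = e s then x s else 0 with hy
  have hye : ∀ s, y (e s) = x s := by
    intro s
    simp only [hy]
    rw [Finset.sum_eq_single s]
    · simp
    · intro t _ hts; simp [he.ne (Ne.symm hts)]
    · simp
  have hyne : y ≠ 0 := fun h => hx (funext fun s => by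
    have := hye s; rw [h] at this; simpa using this.symm)
  have key := (posDef_iff_dotProduct_mulVec.mp hL).2 (x := y) hyne
  simp only [star_trivial, dotProduct, mulVec] at key ⊢
  have e1 : ∑ a, y a * (∑ b, L a b * y b) = ∑ s, x s * ∑ t, L (e s) (e t) * x t := by
    rw [show (∑ a, y a * (∑ b, L a b * y b)) = ∑ a, y a * ((fun a => ∑ b, L a b * y b) a) from rfl,
      sum_pull e x]
    congr 1; ext s
    congr 1
    have : ∀ b, L (e s) b * y b = y b * L (e s) b := fun b => mul_comm _ _
    simp_rw [this]
    rw [show (∑ b, y b * L (e s) b) = ∑ b, (∑ u, if b = e u then x u else 0) * ((fun b => L (e s) b) b) from rfl, sum_pull e x]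
    simp_rw [mul_comm]
  rw [e1] at key
  exact key

lemma trace_zero_of_inj {N : ℕ} {L H : Matrix (Fin N) (Fin N) ℝ}
    (htr : ∀ J : Finset (Fin N), ((subm L J)⁻¹ * subm H J).trace = 0)
    {m : ℕ} (e : Fin m → Fin N) (he : Function.Injective e) :
    ((L.submatrix e e)⁻¹ * H.submatrix e e).trace = 0 := by
  set J : Finset (Fin N) := Finset.univ.map ⟨e, he⟩ with hJ
  have hmem : ∀ s, e s ∈ J := fun s => by simp [hJ]
  have hbij : Function.Bijective (fun s => (⟨e s, hmem s⟩ : J)) := by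
    constructor
    · intro a b hab
      exact he (congrArg Subtype.val hab)
    · rintro ⟨a, ha⟩
      simp only [hJ, Finset.mem_map, Finset.mem_univ, Function.Embedding.coeFn_mk,
        true_and] at ha
      obtain ⟨s, hs⟩ := ha
      exact ⟨s, by simp [hs]⟩
  set ε : Fin m ≃ J := Equiv.ofBijective _ hbij with hε
  have hsub : ∀ (M : Matrix (Fin N) (Fin N) ℝ),
      subm M J = (M.submatrix e e).submatrix ε.symm ε.symm := by
    intro M; ext a b
    simp only [subm, submatrix_apply]
    have h1 : e (ε.symm a) = (a : Fin N) := congrArg Subtype.val (ε.apply_symm_apply a)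
    have h2 : e (ε.symm b) = (b : Fin N) := congrArg Subtype.val (ε.apply_symm_apply b)
    rw [h1, h2]
  have h := htr J
  rw [hsub L, hsub H, inv_submatrix_equiv, submatrix_mul_equiv] at h
  rw [← h]
  simp only [Matrix.trace, Matrix.diag, submatrix_apply]
  exact (Equiv.sum_comp ε.symm _).symm

def HasChain {N : ℕ} (L : Matrix (Fin N) (Fin N) ℝ) (n : ℕ) (i j : Fin N) : Prop :=
  ∃ f : ℕ → Fin N, f 0 = i ∧ f n = j ∧ ∀ t, t < n → L (f t) (f (t+1)) ≠ 0

lemma connected_chain {N : ℕ} {L : Matrix (Fin N) (Fin N) ℝ} {i j : Fin N}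
    (h : ConnectedIn L i j) : ∃ n, HasChain L n i j := by
  induction h with
  | refl => exact ⟨0, fun _ => i, rfl, rfl, fun t ht => absurd ht (by omega)⟩
  | @tail b c hab hbc ih =>
    obtain ⟨n, f, h0, hn, hedge⟩ := ih
    refine ⟨n + 1, fun t => if t ≤ n then f t else c, by simp [h0], by simp, ?_⟩
    intro t ht
    rcases lt_or_eq_of_le (Nat.lt_succ_iff.mp ht) with h | h
    · simp only [if_pos (le_of_lt h), if_pos (Nat.succ_le_of_lt h)]
      exact hedge t h
    · subst h
      simp only [le_refl, if_pos, if_neg (by omega : ¬ t + 1 ≤ t)]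
      rw [hn]; exact hbc

lemma splice {N n : ℕ} {L : Matrix (Fin N) (Fin N) ℝ} {i j : Fin N} {f : ℕ → Fin N}
    (hf0 : f 0 = i) (hfn : f n = j) (hedge : ∀ t, t < n → L (f t) (f (t+1)) ≠ 0)
    {s k : ℕ} (hsk : s < k) (hkn : k ≤ n) (hkey : L (f s) (f k) ≠ 0) :
    HasChain L (s + 1 + (n - k)) i j := by
  refine ⟨fun u => if u ≤ s then f u else f (u + (k - s - 1)), by simp [hf0], ?_, ?_⟩
  · simp only [if_neg (by omega : ¬ s + 1 + (n - k) ≤ s)]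
    rw [show s + 1 + (n - k) + (k - s - 1) = n by omega, hfn]
  · intro u hu
    rcases lt_trichotomy u s with h | h | h
    · simp only [if_pos (le_of_lt h), if_pos (Nat.succ_le_of_lt h)]
      exact hedge u (by omega)
    · subst h
      simp only [le_refl, if_pos, if_neg (by omega : ¬ u + 1 ≤ u)]
      rw [show u + 1 + (k - u - 1) = k by omega]
      exact hkey
    · simp only [if_neg (by omega : ¬ u ≤ s), if_neg (by omega : ¬ u + 1 ≤ s)]
      rw [show u + 1 + (k - s - 1) = (u + (k - s - 1)) + 1 by omega]
      exact hedge _ (by omega)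

lemma chain_H_zero {N : ℕ} (L H : Matrix (Fin N) (Fin N) ℝ)
    (hL : L.PosDef) (hH : H.IsSymm)
    (htr : ∀ J : Finset (Fin N), ((subm L J)⁻¹ * subm H J).trace = 0) :
    ∀ n : ℕ, ∀ i j : Fin N, HasChain L n i j → H i j = 0 := by
  intro n
  induction n using Nat.strong_induction_on with
  | _ n IH =>
  intro i j hc
  by_cases hex : ∃ k, k < n ∧ HasChain L k i j
  · obtain ⟨k, hk, hck⟩ := hex
    exact IH k hk i j hck
  push_neg at hex
  obtain ⟨f, hf0, hfn, hedge⟩ := hc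
  rcases Nat.eq_zero_or_pos n with hn0 | hnpos
  · -- n = 0 : i = j, use singleton
    subst hn0
    have hij : i = j := by rw [← hf0, hfn]
    subst hij
    set e : Fin 1 → Fin N := fun _ => i with he
    have hinj : Function.Injective e := fun a b _ => Subsingleton.elim a b
    have hA := posdef_submatrix_s12 hL e hinj
    have htr1 := trace_zero_of_inj htr e hinj
    rw [trace_fin_one, mul_apply, Fin.sum_univ_one, inv_def,
      Matrix.smul_apply, adjugate_fin_one, Ring.inverse_eq_inv'] at htr1
    have hdet : (L.submatrix e e).det ≠ 0 := hA.det_pos.ne'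
    have h1 : (1 : Matrix (Fin 1) (Fin 1) ℝ) 0 0 = 1 := by simp
    rw [h1, smul_eq_mul, mul_one] at htr1
    have := mul_eq_zero.mp htr1
    rcases this with h | h
    · exact absurd h (inv_ne_zero hdet)
    · exact h
  · -- n ≥ 1
    -- injectivity of f on [0, n]
    have haux : ∀ s t : ℕ, s < t → t ≤ n → f s ≠ f t := by
      intro s t hst htn heq
      rcases lt_or_eq_of_le htn with htn' | htn'
      · have hk := hedge t htn'
        rw [← heq] at hk
        have hc2 := splice hf0 hfn hedge (show s < t + 1 by omega) (by omega) hk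
        exact hex _ (by omega) hc2
      · subst htn'
        refine hex s (by omega) ⟨f, hf0, ?_, fun u hu => hedge u (by omega)⟩
        rw [heq, hfn]
    have hchord : ∀ s t : ℕ, s + 1 < t → t ≤ n → L (f s) (f t) = 0 := by
      intro s t hst htn
      by_contra hne
      have hc2 := splice hf0 hfn hedge (show s < t by omega) htn hne
      exact hex _ (by omega) hc2
    have hHzero : ∀ s t : ℕ, s ≤ t → t ≤ n → ¬(s = 0 ∧ t = n) → H (f s) (f t) = 0 := by
      intro s t hst htn hne
      have hcst : HasChain L (t - s) (f s) (f t) := by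
        refine ⟨fun u => f (u + s), by simp, ?_, ?_⟩
        · show f (t - s + s) = f t
          rw [show t - s + s = t by omega]
        · intro u hu
          show L (f (u + s)) (f (u + 1 + s)) ≠ 0
          rw [show u + 1 + s = (u + s) + 1 by omega]
          exact hedge _ (by omega)
      exact IH (t - s) (by omega) _ _ hcst
    -- set up the matrices
    set e : Fin (n + 1) → Fin N := fun s => f (s : ℕ) with he
    have hinj : Function.Injective e := by
      intro a b hab
      rcases lt_trichotomy (a : ℕ) (b : ℕ) with h | h | h
      · exact absurd hab (haux a b h (by omega))
      · exact Fin.ext h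
      · exact absurd hab.symm (haux b a h (by omega))
    have hApd := posdef_submatrix_s12 hL e hinj
    have htrAB := trace_zero_of_inj htr e hinj
    set A := L.submatrix e e with hA
    set B := H.submatrix e e with hB
    have hlast : (0 : Fin (n + 1)) ≠ Fin.last n := by
      simp only [ne_eq, Fin.ext_iff, Fin.val_zero, Fin.val_last]
      omega
    have hBzero : ∀ s t : Fin (n + 1), ¬(s = 0 ∧ t = Fin.last n) →
        ¬(s = Fin.last n ∧ t = 0) → B s t = 0 := by
      intro s t h1 h2
      show H (e s) (e t) = 0
      rcases lt_trichotomy (s : ℕ) (t : ℕ) with h | h | h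
      · refine hHzero s t (le_of_lt h) (by omega) ?_
        rintro ⟨hs0, htn⟩
        exact h1 ⟨Fin.ext hs0, Fin.ext (by simp [htn])⟩
      · have : e s = e t := by simp only [he]; rw [h]
        rw [this]
        exact hHzero t t le_rfl (by omega) (by rintro ⟨h1', h2'⟩; omega)
      · rw [hH.apply (e t) (e s)]  -- H (e s) (e t) = ... careful
        refine hHzero t s (le_of_lt h) (by omega) ?_
        rintro ⟨ht0, hsn⟩
        exact h2 ⟨Fin.ext hsn, Fin.ext (by simp [ht0])⟩
    -- trace computation
    have hFz : ∀ t : Fin (n + 1), t ≠ 0 → t ≠ Fin.last n →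
        (∑ s, A⁻¹ t s * B s t) = 0 := by
      intro t ht0 htl
      refine Finset.sum_eq_zero fun s _ => ?_
      rw [hBzero s t (by rintro ⟨_, h⟩; exact htl h) (by rintro ⟨_, h⟩; exact ht0 h), mul_zero]
    have hF0 : (∑ s, A⁻¹ 0 s * B s 0) = A⁻¹ 0 (Fin.last n) * B (Fin.last n) 0 := by
      refine Finset.sum_eq_single (Fin.last n) (fun s _ hs => ?_) (by simp)
      rw [hBzero s 0 (by rintro ⟨_, h⟩; exact hlast h) (by rintro ⟨h, _⟩; exact hs h),
        mul_zero]
    have hFl : (∑ s, A⁻¹ (Fin.last n) s * B s (Fin.last n))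
        = A⁻¹ (Fin.last n) 0 * B 0 (Fin.last n) := by
      refine Finset.sum_eq_single 0 (fun s _ hs => ?_) (by simp)
      rw [hBzero s (Fin.last n) (by rintro ⟨h, _⟩; exact hs h)
        (by rintro ⟨_, h⟩; exact hlast h.symm), mul_zero]
    have htrace : (A⁻¹ * B).trace
        = A⁻¹ 0 (Fin.last n) * B (Fin.last n) 0 + A⁻¹ (Fin.last n) 0 * B 0 (Fin.last n) := by
      rw [Matrix.trace]
      simp only [Matrix.diag, mul_apply]
      rw [← Finset.sum_subset (Finset.subset_univ {0, Fin.last n})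
        (fun t _ ht => hFz t (fun h => ht (by simp [h])) (fun h => ht (by simp [h])))]
      rw [Finset.sum_pair hlast, hF0, hFl]
    rw [htrace] at htrAB
    -- symmetry of A⁻¹
    have hAinvsym : A⁻¹ (Fin.last n) 0 = A⁻¹ 0 (Fin.last n) := by
      have := hApd.isHermitian.inv.apply 0 (Fin.last n)
      simpa using this
    -- identify B entries with H i j
    have hB0l : B 0 (Fin.last n) = H i j := by
      show H (e 0) (e (Fin.last n)) = H i j
      simp only [he, Fin.val_zero, Fin.val_last, hf0, hfn]
    have hBl0 : B (Fin.last n) 0 = H i j := by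
      show H (e (Fin.last n)) (e 0) = H i j
      simp only [he, Fin.val_zero, Fin.val_last, hf0, hfn]
      exact hH.apply j i ▸ rfl
    rw [hAinvsym, hB0l, hBl0] at htrAB
    -- nonvanishing of the inverse corner entry
    have hcorner : A⁻¹ 0 (Fin.last n) ≠ 0 := by
      rw [inv_def, Matrix.smul_apply, Ring.inverse_eq_inv', smul_eq_mul]
      have hdet : A.det ≠ 0 := hApd.det_pos.ne'
      refine mul_ne_zero (inv_ne_zero hdet) ?_
      rw [adjugate_fin_succ_eq_det_submatrix]
      refine mul_ne_zero (by positivity) ?_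
      set M := A.submatrix (Fin.last n).succAbove (0 : Fin (n+1)).succAbove with hM
      have hMentry : ∀ s t : Fin n, M s t = L (f (s : ℕ)) (f ((t : ℕ) + 1)) := by
        intro s t
        simp only [hM, submatrix_apply, Fin.succAbove_last, Fin.zero_succAbove, hA, he]
        rfl
      have htri : M.BlockTriangular OrderDual.toDual := by
        intro s t hst
        have hst' : (s : ℕ) < (t : ℕ) := hst
        rw [hMentry]
        exact hchord s (t + 1) (by omega) (by omega)
      rw [Matrix.det_of_lowerTriangular M htri]
      refine Finset.prod_ne_zero_iff.mpr fun t _ => ?_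
      rw [hMentry]
      exact hedge t (by omega)
    have : A⁻¹ 0 (Fin.last n) * (H i j + H i j) = 0 := by ring_nf; ring_nf at htrAB; linarith
    rcases mul_eq_zero.mp this with h | h
    · exact absurd h hcorner
    · linarith

/-- If `Tr((L*_J)⁻¹ H_J) = 0` for all `J`, then `H` vanishes on every pair of
indices lying in the same connected component of the determinantal graph of `L*`. -/
theorem null_space_of_hessian {N : ℕ} (Lstar H : Matrix (Fin N) (Fin N) ℝ)
    (hL : Lstar.PosDef) (hH : H.IsSymm)
    (htr : ∀ J : Finset (Fin N), ((subm Lstar J)⁻¹ * subm H J).trace = 0) :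
    ∀ i j : Fin N, ConnectedIn Lstar i j → H i j = 0 := by
  intro i j hconn
  obtain ⟨n, hc⟩ := connected_chain hconn
  exact chain_H_zero Lstar H hL hH htr n i j hc
end
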